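/- arXiv:2010.00429 — 6 statements merged into one kernel-verified Lean document; each statement's English description precedes it below -/
import Mathlib

section
/- Let G be a finite simple bipartite graph with maximum degree Δ, where Δ ≥ 2. Then the injective chromatic index of G satisfies χ'_inj(G) ≤ ⌈27 Δ ln Δ⌉. -/
open SimpleGraph

/-- Two distinct edges of `G` *conflict* if they are at distance exactly 1 in `G`
(they share no endpoint but some endpoint of one is adjacent to some endpoint of the
other), or they lie in a common triangle of `G`. -/
def EdgeConflict {V : Type*} (G : SimpleGraph V) (e₁ e₂ : Sym2 V) : Prop :=
  e₁ ≠ e₂ ∧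
    (((∀ u ∈ e₁, u ∉ e₂) ∧ ∃ u ∈ e₁, ∃ v ∈ e₂, G.Adj u v) ∨
      (∃ a b c : V, G.Adj a b ∧ G.Adj b c ∧ G.Adj a c ∧
        e₁ ∈ ({s(a, b), s(b, c), s(a, c)} : Set (Sym2 V)) ∧
        e₂ ∈ ({s(a, b), s(b, c), s(a, c)} : Set (Sym2 V))))

/-- An injective edge-coloring of `G` with `k` colors. -/
def IsInjEdgeColoring {V : Type*} (G : SimpleGraph V) {k : ℕ} (f : Sym2 V → Fin k) : Prop :=
  ∀ e₁ ∈ G.edgeSet, ∀ e₂ ∈ G.edgeSet, EdgeConflict G e₁ e₂ → f e₁ ≠ f e₂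

/-- The injective chromatic index of `G`. -/
noncomputable def injChromIndex {V : Type*} (G : SimpleGraph V) : ℕ :=
  sInf {k : ℕ | ∃ f : Sym2 V → Fin k, IsInjEdgeColoring G f}


/-- `G` is bipartite: its vertices split into two sides such that every edge joins
the two sides. -/
def IsBipartiteGraph {V : Type*} (G : SimpleGraph V) : Prop :=
  ∃ A : Set V, ∀ ⦃u v : V⦄, G.Adj u v → (u ∈ A ↔ v ∉ A)


open SimpleGraph Finset
namespace InjAux
set_option linter.unusedSectionVars false

variable {V : Type*} [Fintype V] [DecidableEq V] (G : SimpleGraph V) [DecidableRel G.Adj]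

def Sat {Δ C : ℕ} (g : V → Fin C → Fin Δ) (u w : V) : Prop :=
  ∃ γ : Fin C, (g u γ).val = 0 ∧ ∀ u', G.Adj u' w → u' ≠ u → (g u' γ).val ≠ 0

def GoodOn {Δ C : ℕ} (X : Finset V) (g : V → Fin C → Fin Δ) : Prop :=
  ∀ u w, G.Adj u w → G.neighborFinset w ⊆ X → Sat G g u w

open Classical in
noncomputable def QSet (Δ C : ℕ) (X : Finset V) : Finset (V → Fin C → Fin Δ) :=
  Finset.univ.filter (fun g => (∀ x ∉ X, ∀ γ, (g x γ).val = 0) ∧ GoodOn G X g)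

lemma mem_QSet {Δ C : ℕ} {X : Finset V} {g : V → Fin C → Fin Δ} :
    g ∈ QSet G Δ C X ↔ (∀ x ∉ X, ∀ γ, (g x γ).val = 0) ∧ GoodOn G X g := by
  classical
  simp [QSet]

lemma Sat_congr {Δ C : ℕ} {g g' : V → Fin C → Fin Δ} {u w : V} (hu : G.Adj u w)
    (h : ∀ x ∈ G.neighborFinset w, g x = g' x) (hs : Sat G g u w) : Sat G g' u w := by
  obtain ⟨γ, h1, h2⟩ := hs
  refine ⟨γ, ?_, ?_⟩
  · rw [← h u (by simpa using hu.symm)]; exact h1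
  · intro u' hu' hne
    rw [← h u' (by simpa using hu'.symm)]
    exact h2 u' hu' hne

lemma QSet_empty_card {Δ C : ℕ} [NeZero Δ] : (QSet G Δ C (∅ : Finset V)).card = 1 := by
  classical
  have : QSet G Δ C (∅ : Finset V) = {fun _ _ => (0 : Fin Δ)} := by
    ext g
    rw [mem_QSet, Finset.mem_singleton]
    constructor
    · rintro ⟨h1, -⟩
      funext x γ
      have := h1 x (by simp) γ
      exact Fin.ext (by simpa using this)
    · rintro rfl
      refine ⟨fun x _ γ => by simp, ?_⟩
      intro u w hadj hsub
      exfalso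
      have : u ∈ G.neighborFinset w := by simpa using hadj.symm
      simpa using hsub this
  rw [this]; simp

open Classical in
noncomputable def TSet (Δ C : ℕ) (X : Finset V) (v : V) : Finset (V → Fin C → Fin Δ) :=
  Finset.univ.filter (fun g => (∀ x ∉ insert v X, ∀ γ, (g x γ).val = 0) ∧ GoodOn G X g)

lemma mem_TSet {Δ C : ℕ} {X : Finset V} {v : V} {g : V → Fin C → Fin Δ} :
    g ∈ TSet G Δ C X v ↔ (∀ x ∉ insert v X, ∀ γ, (g x γ).val = 0) ∧ GoodOn G X g := by
  classical
  simp [TSet]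

lemma card_TSet {Δ C : ℕ} [NeZero Δ] {X : Finset V} {v : V} (hv : v ∉ X) :
    (TSet G Δ C X v).card = Δ ^ C * (QSet G Δ C X).card := by
  classical
  have : (TSet G Δ C X v).card = ((Finset.univ : Finset (Fin C → Fin Δ)) ×ˢ QSet G Δ C X).card := by
    refine Finset.card_bij' (fun g _ => (g v, Function.update g v (fun _ => 0)))
      (fun p _ => Function.update p.2 v p.1) ?_ ?_ ?_ ?_
    · rintro g hg
      rw [mem_TSet] at hg
      obtain ⟨hd, hgood⟩ := hg
      refine Finset.mem_product.2 ⟨Finset.mem_univ _, ?_⟩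
      dsimp only
      rw [mem_QSet]
      constructor
      · intro x hx γ
        by_cases hxv : x = v
        · subst hxv; simp [Function.update_self]
        · rw [Function.update_of_ne hxv]
          exact hd x (by simp [hx, hxv]) γ
      · intro u w hadj hsub
        refine Sat_congr G hadj ?_ (hgood u w hadj hsub)
        intro x hx
        have : x ≠ v := fun h => hv (h ▸ hsub hx)
        rw [Function.update_of_ne this]
    · rintro ⟨k, g⟩ hp
      rw [Finset.mem_product, mem_QSet] at hp
      obtain ⟨-, hd, hgood⟩ := hp
      dsimp only at hd hgood ⊢
      rw [mem_TSet]
      constructor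
      · intro x hx γ
        have hxv : x ≠ v := fun h => hx (h ▸ Finset.mem_insert_self v X)
        rw [Function.update_of_ne hxv]
        exact hd x (fun h => hx (Finset.mem_insert_of_mem h)) γ
      · intro u w hadj hsub
        refine Sat_congr G hadj ?_ (hgood u w hadj hsub)
        intro x hx
        have : x ≠ v := fun h => hv (h ▸ hsub hx)
        rw [Function.update_of_ne this]
    · intro g hg
      dsimp only
      rw [mem_TSet] at hg
      funext x
      by_cases hxv : x = v
      · subst hxv; simp [Function.update_self]
      · simp [Function.update_of_ne hxv]
    · rintro ⟨k, g⟩ hp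
      rw [Finset.mem_product, mem_QSet] at hp
      obtain ⟨-, hd, -⟩ := hp
      dsimp only at hd ⊢
      simp only [Function.update_self]
      refine Prod.ext rfl ?_
      simp only
      funext x
      by_cases hxv : x = v
      · subst hxv
        rw [Function.update_self]
        funext γ
        exact (Fin.ext (hd x hv γ)).symm
      · rw [Function.update_of_ne hxv, Function.update_of_ne hxv]
  rw [this, Finset.card_product]
  congr 1
  simp [Fintype.card_fun]


open Classical in
noncomputable def badLoc (Δ : ℕ) [NeZero Δ] (u w : V) : Finset (V → Fin Δ) :=
  (Fintype.piFinset (fun x => if x ∈ G.neighborFinset w then (Finset.univ : Finset (Fin Δ))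
      else {0})).filter
    (fun p => ¬ ((p u).val = 0 ∧ ∀ u', G.Adj u' w → u' ≠ u → (p u').val ≠ 0))

lemma badLoc_card {Δ : ℕ} [NeZero Δ] {u w : V} (hu : G.Adj u w) :
    (badLoc G Δ u w).card = Δ ^ G.degree w - (Δ - 1) ^ (G.degree w - 1) := by
  classical
  have huw : u ∈ G.neighborFinset w := by simpa using hu.symm
  set Ω : Finset (V → Fin Δ) :=
    Fintype.piFinset (fun x => if x ∈ G.neighborFinset w then (Finset.univ : Finset (Fin Δ))
      else {0}) with hΩ
  set P : (V → Fin Δ) → Prop :=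
    fun p => (p u).val = 0 ∧ ∀ u', G.Adj u' w → u' ≠ u → (p u').val ≠ 0 with hP
  have hgood : Ω.filter P = Fintype.piFinset
      (fun x => if x = u then ({0} : Finset (Fin Δ))
        else if x ∈ G.neighborFinset w then Finset.univ.filter (fun a : Fin Δ => a ≠ 0)
        else {0}) := by
    ext p
    simp only [Finset.mem_filter, Fintype.mem_piFinset, hΩ, hP]
    constructor
    · rintro ⟨h1, h2, h3⟩
      intro x
      by_cases hxu : x = u
      · subst hxu
        rw [if_pos rfl, Finset.mem_singleton]
        refine Fin.ext ?_
        rw [h2]; simp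
      · rw [if_neg hxu]
        by_cases hxw : x ∈ G.neighborFinset w
        · rw [if_pos hxw]
          refine Finset.mem_filter.2 ⟨Finset.mem_univ _, ?_⟩
          intro h0
          exact h3 x ((by simpa using hxw : G.Adj w x).symm) hxu (by rw [h0]; rfl)
        · rw [if_neg hxw]
          have := h1 x
          rwa [if_neg hxw] at this
    · intro h
      refine ⟨?_, ?_, ?_⟩
      · intro x
        have := h x
        by_cases hxu : x = u
        · subst hxu
          rw [if_pos huw]
          exact Finset.mem_univ _
        · rw [if_neg hxu] at this
          by_cases hxw : x ∈ G.neighborFinset w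
          · rw [if_pos hxw]; exact Finset.mem_univ _
          · rw [if_neg hxw] at this ⊢; exact this
      · have := h u
        rw [if_pos rfl, Finset.mem_singleton] at this
        rw [this]; rfl
      · intro u' hu' hne h0
        have := h u'
        rw [if_neg hne, if_pos (by simpa using hu'.symm), Finset.mem_filter] at this
        exact this.2 (Fin.ext h0)
  have hΩcard : Ω.card = Δ ^ G.degree w := by
    rw [hΩ, Fintype.card_piFinset]
    have : ∀ x : V, ((if x ∈ G.neighborFinset w then (Finset.univ : Finset (Fin Δ))
        else {0}).card) = if x ∈ G.neighborFinset w then Δ else 1 := by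
      intro x; split <;> simp
    simp only [this]
    rw [Finset.prod_ite_mem, Finset.univ_inter, Finset.prod_const]
    rw [SimpleGraph.card_neighborFinset_eq_degree]
  have hgoodcard : (Ω.filter P).card = (Δ - 1) ^ (G.degree w - 1) := by
    rw [hgood, Fintype.card_piFinset]
    have : ∀ x : V, ((if x = u then ({0} : Finset (Fin Δ))
        else if x ∈ G.neighborFinset w then Finset.univ.filter (fun a : Fin Δ => a ≠ 0)
        else {0}).card) = if x ∈ (G.neighborFinset w).erase u then Δ - 1 else 1 := by
      intro x
      by_cases hxu : x = u
      · subst hxu; simp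
      · rw [if_neg hxu]
        by_cases hxw : x ∈ G.neighborFinset w
        · rw [if_pos hxw, if_pos (Finset.mem_erase.2 ⟨hxu, hxw⟩)]
          have : (Finset.univ.filter (fun a : Fin Δ => a ≠ 0)) =
              (Finset.univ : Finset (Fin Δ)).erase 0 := by
            ext a
            simp [Finset.mem_erase, and_comm]
          rw [this, Finset.card_erase_of_mem (Finset.mem_univ _)]
          simp
        · rw [if_neg hxw, if_neg (fun h => hxw (Finset.mem_erase.1 h).2)]
          simp
    simp only [this]
    rw [Finset.prod_ite_mem, Finset.univ_inter, Finset.prod_const,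
      Finset.card_erase_of_mem huw, SimpleGraph.card_neighborFinset_eq_degree]
  have : badLoc G Δ u w = Ω \ Ω.filter P := by
    rw [badLoc, Finset.filter_not]
  rw [this, Finset.card_sdiff_of_subset (Finset.filter_subset _ _), hΩcard, hgoodcard]


open Classical in
lemma bad_filter_card {Δ C : ℕ} [NeZero Δ] {X : Finset V} {v u w : V}
    (hu : G.Adj u w) (hvw : v ∈ G.neighborFinset w) :
    ((TSet G Δ C X v).filter (fun g => ¬ Sat G g u w)).card ≤
      (badLoc G Δ u w).card ^ C * (QSet G Δ C (X \ G.neighborFinset w)).card := by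
  classical
  have hkey : ((TSet G Δ C X v).filter (fun g => ¬ Sat G g u w)).card ≤
      ((Fintype.piFinset (fun _ : Fin C => badLoc G Δ u w)) ×ˢ
        QSet G Δ C (X \ G.neighborFinset w)).card := by
    refine Finset.card_le_card_of_injOn
      (fun g => (fun γ x => if x ∈ G.neighborFinset w then g x γ else 0,
                 fun x γ => if x ∈ G.neighborFinset w then 0 else g x γ)) ?_ ?_
    · intro g hg
      rw [Finset.mem_coe, Finset.mem_filter, mem_TSet] at hg
      dsimp only
      obtain ⟨⟨hd, hgood⟩, hbad⟩ := hg
      rw [Finset.mem_coe, Finset.mem_product]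
      dsimp only
      constructor
      · rw [Fintype.mem_piFinset]
        intro γ
        rw [badLoc, Finset.mem_filter]
        constructor
        · rw [Fintype.mem_piFinset]
          intro x
          by_cases hxw : x ∈ G.neighborFinset w
          · rw [if_pos hxw, if_pos hxw]; exact Finset.mem_univ _
          · rw [if_neg hxw, if_neg hxw]; exact Finset.mem_singleton_self _
        · dsimp only
          rw [if_pos (by simpa using hu.symm : u ∈ G.neighborFinset w)]
          intro ⟨h1, h2⟩
          refine hbad ⟨γ, h1, ?_⟩
          intro u' hu' hne
          have := h2 u' hu' hne
          rwa [if_pos (by simpa using hu'.symm : u' ∈ G.neighborFinset w)] at this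
      · rw [mem_QSet]
        constructor
        · intro x hx γ
          by_cases hxw : x ∈ G.neighborFinset w
          · rw [if_pos hxw]; rfl
          · rw [if_neg hxw]
            refine hd x ?_ γ
            intro hmem
            rcases Finset.mem_insert.1 hmem with h | h
            · exact hxw (h ▸ hvw)
            · exact hx (Finset.mem_sdiff.2 ⟨h, hxw⟩)
        · intro u' w' hadj' hsub'
          have hsubX : G.neighborFinset w' ⊆ X := fun x hx =>
            (Finset.mem_sdiff.1 (hsub' hx)).1
          refine Sat_congr G hadj' ?_ (hgood u' w' hadj' hsubX)
          intro x hx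
          have hxnw : x ∉ G.neighborFinset w := (Finset.mem_sdiff.1 (hsub' hx)).2
          funext γ
          rw [if_neg hxnw]
    · intro g1 hg1 g2 hg2 heq
      simp only [Prod.mk.injEq] at heq
      obtain ⟨e1, e2⟩ := heq
      funext x γ
      by_cases hxw : x ∈ G.neighborFinset w
      · have := congrFun (congrFun e1 γ) x
        rwa [if_pos hxw, if_pos hxw] at this
      · have := congrFun (congrFun e2 x) γ
        rwa [if_neg hxw, if_neg hxw] at this
  calc ((TSet G Δ C X v).filter (fun g => ¬ Sat G g u w)).card ≤ _ := hkey
    _ = (badLoc G Δ u w).card ^ C * (QSet G Δ C (X \ G.neighborFinset w)).card := by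
        rw [Finset.card_product, Fintype.card_piFinset]
        simp


open Classical in
noncomputable def csSet (X : Finset V) (v : V) : Finset (V × V) :=
  ((G.neighborFinset v).biUnion (fun w => (G.neighborFinset w).image (fun u => (u, w)))).filter
    (fun c => G.neighborFinset c.2 ⊆ insert v X)

lemma mem_csSet {X : Finset V} {v : V} {c : V × V} :
    c ∈ csSet G X v ↔ (G.Adj v c.2 ∧ G.Adj c.1 c.2) ∧ G.neighborFinset c.2 ⊆ insert v X := by
  classical
  obtain ⟨u, w⟩ := c
  simp only [csSet, Finset.mem_filter, Finset.mem_biUnion, Finset.mem_image,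
    SimpleGraph.mem_neighborFinset]
  constructor
  · rintro ⟨⟨w', hw', u', hu', heq⟩, hsub⟩
    injection heq with e1 e2
    subst e1; subst e2
    exact ⟨⟨hw', hu'.symm⟩, hsub⟩
  · rintro ⟨⟨h1, h2⟩, hsub⟩
    exact ⟨⟨w, h1, u, h2.symm, rfl⟩, hsub⟩

lemma csSet_card_le {X : Finset V} {v : V} {Δ : ℕ} (hmax : G.maxDegree ≤ Δ) :
    (csSet G X v).card ≤ Δ * Δ := by
  classical
  calc (csSet G X v).card
      ≤ ((G.neighborFinset v).biUnion
          (fun w => (G.neighborFinset w).image (fun u => (u, w)))).card :=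
        Finset.card_filter_le _ _
    _ ≤ ∑ w ∈ G.neighborFinset v, ((G.neighborFinset w).image (fun u => (u, w))).card :=
        Finset.card_biUnion_le
    _ ≤ ∑ w ∈ G.neighborFinset v, Δ := by
        refine Finset.sum_le_sum ?_
        intro w _
        calc ((G.neighborFinset w).image (fun u => (u, w))).card
            ≤ (G.neighborFinset w).card := Finset.card_image_le
          _ = G.degree w := G.card_neighborFinset_eq_degree w
          _ ≤ G.maxDegree := G.degree_le_maxDegree w
          _ ≤ Δ := hmax
    _ = (G.neighborFinset v).card * Δ := by rw [Finset.sum_const, smul_eq_mul]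
    _ ≤ Δ * Δ := by
        refine Nat.mul_le_mul_right _ ?_
        calc (G.neighborFinset v).card = G.degree v := G.card_neighborFinset_eq_degree v
          _ ≤ G.maxDegree := G.degree_le_maxDegree v
          _ ≤ Δ := hmax

open Classical in
lemma cover_lemma {Δ C : ℕ} [NeZero Δ] (X : Finset V) (v : V) :
    TSet G Δ C X v ⊆ QSet G Δ C (insert v X) ∪
      (csSet G X v).biUnion (fun c => (TSet G Δ C X v).filter (fun g => ¬ Sat G g c.1 c.2)) := by
  intro g hg
  have hg' := hg
  rw [mem_TSet] at hg'
  obtain ⟨hd, hgood⟩ := hg'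
  by_cases hcase : GoodOn G (insert v X) g
  · exact Finset.mem_union_left _ ((mem_QSet G).2 ⟨hd, hcase⟩)
  · refine Finset.mem_union_right _ ?_
    rw [GoodOn] at hcase
    push_neg at hcase
    obtain ⟨u, w, hadj, hsub, hnsat⟩ := hcase
    have hvNw : v ∈ G.neighborFinset w := by
      by_contra hvn
      have : G.neighborFinset w ⊆ X := by
        intro x hx
        rcases Finset.mem_insert.1 (hsub hx) with h | h
        · exact absurd (h ▸ hx) hvn
        · exact h
      exact hnsat (hgood u w hadj this)
    refine Finset.mem_biUnion.2 ⟨(u, w), ?_, ?_⟩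
    · rw [mem_csSet]
      exact ⟨⟨(by simpa using hvNw : G.Adj w v).symm, hadj⟩, hsub⟩
    · exact Finset.mem_filter.2 ⟨hg, hnsat⟩


open Classical in
lemma main_ind {Δ C : ℕ} [NeZero Δ] (hΔ1 : 1 ≤ Δ) (hmax : G.maxDegree ≤ Δ)
    (β : ℝ) (hβ : β = (1 - 1/(2*(Δ:ℝ))) * (Δ:ℝ)^C)
    (hkey : ∀ d : ℕ, 1 ≤ d → d ≤ Δ →
      (((Δ^d - (Δ-1)^(d-1) : ℕ) : ℝ))^C * (2 * (Δ:ℝ)^3) ≤ β^(d-1) * (Δ:ℝ)^C) :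
    ∀ n : ℕ, ∀ X : Finset V, X.card = n → ∀ v ∉ X,
      β * ((QSet G Δ C X).card : ℝ) ≤ ((QSet G Δ C (insert v X)).card : ℝ) := by
  classical
  have hΔR : (1:ℝ) ≤ (Δ:ℝ) := by exact_mod_cast hΔ1
  have hNpos : (0:ℝ) < (Δ:ℝ)^C := by positivity
  have hfrac : (0:ℝ) < 1 - 1/(2*(Δ:ℝ)) := by
    have h2 : (1:ℝ) ≤ 2*(Δ:ℝ) := by linarith
    have : 1/(2*(Δ:ℝ)) ≤ 1/1 := by
      apply one_div_le_one_div_of_le <;> linarith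
    have h3 : (0:ℝ) < 2*(Δ:ℝ) := by linarith
    rw [sub_pos, div_lt_one h3]; linarith
  have hβpos : 0 < β := by rw [hβ]; exact mul_pos hfrac hNpos
  intro n
  induction n using Nat.strong_induction_on with
  | _ n IH =>
  intro X hXcard v hv
  -- the chaining lemma
  have chain : ∀ S Y : Finset V, Disjoint S Y → (S ∪ Y).card ≤ n →
      β ^ S.card * ((QSet G Δ C Y).card : ℝ) ≤ ((QSet G Δ C (S ∪ Y)).card : ℝ) := by
    intro S
    induction S using Finset.induction_on with
    | empty => intro Y _ _; simp
    | @insert a S ha IHS =>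
      intro Y hdisj hcard
      have haY : a ∉ S ∪ Y := by
        rw [Finset.mem_union]
        rintro (h | h)
        · exact ha h
        · exact (Finset.disjoint_left.1 hdisj (Finset.mem_insert_self a S)) h
      have hcard' : (S ∪ Y).card < n := by
        have h1 : insert a S ∪ Y = insert a (S ∪ Y) := (Finset.insert_union a S Y)
        rw [h1, Finset.card_insert_of_notMem haY] at hcard
        omega
      have hdisj' : Disjoint S Y := Finset.disjoint_of_subset_left (Finset.subset_insert a S) hdisj
      calc β ^ (insert a S).card * ((QSet G Δ C Y).card : ℝ)
          = β * (β ^ S.card * ((QSet G Δ C Y).card : ℝ)) := by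
            rw [Finset.card_insert_of_notMem ha]; ring
        _ ≤ β * ((QSet G Δ C (S ∪ Y)).card : ℝ) :=
            mul_le_mul_of_nonneg_left (IHS Y hdisj' hcard'.le) hβpos.le
        _ ≤ ((QSet G Δ C (insert a (S ∪ Y))).card : ℝ) :=
            IH (S ∪ Y).card hcard' (S ∪ Y) rfl a haY
        _ = ((QSet G Δ C (insert a S ∪ Y)).card : ℝ) := by rw [Finset.insert_union]
  -- counting
  have hT : ((TSet G Δ C X v).card : ℝ) = (Δ:ℝ)^C * ((QSet G Δ C X).card : ℝ) := by
    rw [card_TSet G hv]; push_cast; ring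
  have hcount : ((TSet G Δ C X v).card : ℕ) ≤ (QSet G Δ C (insert v X)).card +
      ∑ c ∈ csSet G X v, ((TSet G Δ C X v).filter (fun g => ¬ Sat G g c.1 c.2)).card := by
    calc (TSet G Δ C X v).card
        ≤ (QSet G Δ C (insert v X) ∪
            (csSet G X v).biUnion
              (fun c => (TSet G Δ C X v).filter (fun g => ¬ Sat G g c.1 c.2))).card :=
          Finset.card_le_card (cover_lemma G X v)
      _ ≤ (QSet G Δ C (insert v X)).card +
            ((csSet G X v).biUnion
              (fun c => (TSet G Δ C X v).filter (fun g => ¬ Sat G g c.1 c.2))).card :=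
          Finset.card_union_le _ _
      _ ≤ _ := by
          gcongr
          exact Finset.card_biUnion_le
  -- per-constraint bound
  have hper : ∀ c ∈ csSet G X v,
      (((TSet G Δ C X v).filter (fun g => ¬ Sat G g c.1 c.2)).card : ℝ) ≤
        (Δ:ℝ)^C / (2*(Δ:ℝ)^3) * ((QSet G Δ C X).card : ℝ) := by
    intro c hc
    obtain ⟨⟨hvw, hadj⟩, hsub⟩ := (mem_csSet G).1 hc
    set u := c.1
    set w := c.2
    have hvNw : v ∈ G.neighborFinset w := by simpa using hvw.symm
    set d := G.degree w with hd
    have hd1 : 1 ≤ d := by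
      rw [hd]
      exact (G.degree_pos_iff_exists_adj w).2 ⟨u, hadj.symm⟩
    have hdΔ : d ≤ Δ := le_trans (G.degree_le_maxDegree w) hmax
    -- decomposition of X
    set S := X ∩ G.neighborFinset w with hS
    set Y := X \ G.neighborFinset w with hY
    have hSY : S ∪ Y = X := by
      rw [hS, hY, Finset.union_comm]
      exact Finset.sdiff_union_inter X (G.neighborFinset w)
    have hdisj : Disjoint S Y := by
      rw [Finset.disjoint_left]
      intro x hx hx'
      exact (Finset.mem_sdiff.1 hx').2 (Finset.mem_inter.1 hx).2
    have hScard : S.card = d - 1 := by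
      have : S = (G.neighborFinset w).erase v := by
        ext x
        rw [hS, Finset.mem_inter, Finset.mem_erase]
        constructor
        · rintro ⟨hx1, hx2⟩
          exact ⟨fun h => hv (h ▸ hx1), hx2⟩
        · rintro ⟨hx1, hx2⟩
          refine ⟨?_, hx2⟩
          rcases Finset.mem_insert.1 (hsub hx2) with h | h
          · exact absurd h hx1
          · exact h
      rw [this, Finset.card_erase_of_mem hvNw, G.card_neighborFinset_eq_degree]
    have hchain : β ^ (d-1) * ((QSet G Δ C Y).card : ℝ) ≤ ((QSet G Δ C X).card : ℝ) := by
      have := chain S Y hdisj (by rw [hSY, hXcard])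
      rwa [hScard, hSY] at this
    have hbadc : (((TSet G Δ C X v).filter (fun g => ¬ Sat G g u w)).card : ℝ) ≤
        (((Δ^d - (Δ-1)^(d-1) : ℕ) : ℝ))^C * ((QSet G Δ C Y).card : ℝ) := by
      have h1 := bad_filter_card G (Δ := Δ) (C := C) (X := X) (v := v) hadj hvNw
      rw [badLoc_card G hadj] at h1
      calc (((TSet G Δ C X v).filter (fun g => ¬ Sat G g u w)).card : ℝ)
          ≤ (((Δ ^ G.degree w - (Δ - 1) ^ (G.degree w - 1)) ^ C *
              (QSet G Δ C (X \ G.neighborFinset w)).card : ℕ) : ℝ) := by exact_mod_cast h1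
        _ = _ := by push_cast; rw [← hd, ← hY]
    have hkey' := hkey d hd1 hdΔ
    have hQYnn : (0:ℝ) ≤ ((QSet G Δ C Y).card : ℝ) := Nat.cast_nonneg _
    have hmC : (0:ℝ) ≤ (((Δ^d - (Δ-1)^(d-1) : ℕ) : ℝ))^C := by positivity
    calc (((TSet G Δ C X v).filter (fun g => ¬ Sat G g u w)).card : ℝ)
        ≤ (((Δ^d - (Δ-1)^(d-1) : ℕ) : ℝ))^C * ((QSet G Δ C Y).card : ℝ) := hbadc
      _ ≤ (β^(d-1) * (Δ:ℝ)^C / (2*(Δ:ℝ)^3)) * ((QSet G Δ C Y).card : ℝ) := by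
          refine mul_le_mul_of_nonneg_right ?_ hQYnn
          rw [le_div_iff₀ (by positivity : (0:ℝ) < 2*(Δ:ℝ)^3)]
          exact hkey'
      _ = ((Δ:ℝ)^C / (2*(Δ:ℝ)^3)) * (β^(d-1) * ((QSet G Δ C Y).card : ℝ)) := by ring
      _ ≤ ((Δ:ℝ)^C / (2*(Δ:ℝ)^3)) * ((QSet G Δ C X).card : ℝ) := by
          refine mul_le_mul_of_nonneg_left hchain (by positivity)
  -- sum the per-constraint bounds
  have hsum : (∑ c ∈ csSet G X v,
      (((TSet G Δ C X v).filter (fun g => ¬ Sat G g c.1 c.2)).card : ℝ)) ≤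
      (Δ:ℝ)^C / (2*(Δ:ℝ)) * ((QSet G Δ C X).card : ℝ) := by
    calc (∑ c ∈ csSet G X v,
        (((TSet G Δ C X v).filter (fun g => ¬ Sat G g c.1 c.2)).card : ℝ))
        ≤ ∑ _c ∈ csSet G X v, (Δ:ℝ)^C / (2*(Δ:ℝ)^3) * ((QSet G Δ C X).card : ℝ) :=
          Finset.sum_le_sum hper
      _ = ((csSet G X v).card : ℝ) * ((Δ:ℝ)^C / (2*(Δ:ℝ)^3) * ((QSet G Δ C X).card : ℝ)) := by
          rw [Finset.sum_const, nsmul_eq_mul]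
      _ ≤ ((Δ*Δ : ℕ) : ℝ) * ((Δ:ℝ)^C / (2*(Δ:ℝ)^3) * ((QSet G Δ C X).card : ℝ)) := by
          refine mul_le_mul_of_nonneg_right ?_ (by positivity)
          exact_mod_cast csSet_card_le G hmax
      _ = (Δ:ℝ)^C / (2*(Δ:ℝ)) * ((QSet G Δ C X).card : ℝ) := by
          push_cast
          have hΔne : (Δ:ℝ) ≠ 0 := by linarith
          field_simp
  -- conclude
  have hfinal : ((TSet G Δ C X v).card : ℝ) ≤ ((QSet G Δ C (insert v X)).card : ℝ) +
      ∑ c ∈ csSet G X v, (((TSet G Δ C X v).filter (fun g => ¬ Sat G g c.1 c.2)).card : ℝ) := by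
    exact_mod_cast hcount
  have : β * ((QSet G Δ C X).card : ℝ) =
      (Δ:ℝ)^C * ((QSet G Δ C X).card : ℝ) -
        (Δ:ℝ)^C / (2*(Δ:ℝ)) * ((QSet G Δ C X).card : ℝ) := by
    rw [hβ]
    have hΔne : (Δ:ℝ) ≠ 0 := by linarith
    field_simp
  rw [this]
  rw [hT] at hfinal
  linarith [hsum, hfinal]


lemma exists_good {Δ C : ℕ} [NeZero Δ] (hΔ1 : 1 ≤ Δ) (hmax : G.maxDegree ≤ Δ)
    (hkey : ∀ d : ℕ, 1 ≤ d → d ≤ Δ →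
      (((Δ^d - (Δ-1)^(d-1) : ℕ) : ℝ))^C * (2 * (Δ:ℝ)^3) ≤
        ((1 - 1/(2*(Δ:ℝ))) * (Δ:ℝ)^C)^(d-1) * (Δ:ℝ)^C) :
    ∃ g : V → Fin C → Fin Δ, GoodOn G (Finset.univ : Finset V) g := by
  classical
  set β : ℝ := (1 - 1/(2*(Δ:ℝ))) * (Δ:ℝ)^C with hβ
  have hΔR : (1:ℝ) ≤ (Δ:ℝ) := by exact_mod_cast hΔ1
  have hNpos : (0:ℝ) < (Δ:ℝ)^C := by positivity
  have hfrac : (0:ℝ) < 1 - 1/(2*(Δ:ℝ)) := by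
    have h3 : (0:ℝ) < 2*(Δ:ℝ) := by linarith
    rw [sub_pos, div_lt_one h3]; linarith
  have hβpos : 0 < β := mul_pos hfrac hNpos
  have hmain := main_ind G hΔ1 hmax β hβ hkey
  have hpos : ∀ X : Finset V, 0 < (QSet G Δ C X).card := by
    intro X
    induction X using Finset.induction_on with
    | empty => rw [QSet_empty_card]; norm_num
    | @insert a X ha IHX =>
      have h := hmain X.card X rfl a ha
      have h2 : (0:ℝ) < β * ((QSet G Δ C X).card : ℝ) := by
        refine mul_pos hβpos ?_
        exact_mod_cast IHX
      have : (0:ℝ) < ((QSet G Δ C (insert a X)).card : ℝ) := lt_of_lt_of_le h2 h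
      exact_mod_cast this
  obtain ⟨g, hg⟩ := Finset.card_pos.1 (hpos Finset.univ)
  exact ⟨g, ((mem_QSet G).1 hg).2⟩

lemma key_ineq {Δ C d : ℕ} (hΔ2 : 2 ≤ Δ) (hd1 : 1 ≤ d) (hdΔ : d ≤ Δ)
    (hC : 27 * (Δ:ℝ) * Real.log Δ ≤ (C:ℝ)) :
    (((Δ^d - (Δ-1)^(d-1) : ℕ) : ℝ))^C * (2 * (Δ:ℝ)^3) ≤
      ((1 - 1/(2*(Δ:ℝ))) * (Δ:ℝ)^C)^(d-1) * (Δ:ℝ)^C := by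
  obtain ⟨e, rfl⟩ : ∃ e, d = e + 1 := ⟨d - 1, by omega⟩
  set x : ℝ := (Δ:ℝ) with hx
  have hx2 : (2:ℝ) ≤ x := by rw [hx]; exact_mod_cast hΔ2
  have hx0 : (0:ℝ) < x := by linarith
  have hx1 : (1:ℝ) < x := by linarith
  have hxm1 : (0:ℝ) < x - 1 := by linarith
  have heΔ : (e:ℝ) ≤ x - 1 := by
    have h : ((e+1:ℕ):ℝ) ≤ ((Δ:ℕ):ℝ) := by exact_mod_cast hdΔ
    push_cast at h
    rw [hx]
    linarith
  have hE0 : (0:ℝ) < Real.exp 1 := Real.exp_pos 1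
  have hE : Real.exp 1 ≤ 2.7182818286 := (Real.exp_one_lt_d9).le
  -- cast of the natural subtraction
  have hle : (Δ-1)^(e+1-1) ≤ Δ^(e+1) := by
    calc (Δ-1)^(e+1-1) ≤ Δ^(e+1-1) := Nat.pow_le_pow_left (Nat.sub_le Δ 1) _
      _ ≤ Δ^(e+1) := Nat.pow_le_pow_right (by omega) (by omega)
  have hcast : (((Δ^(e+1) - (Δ-1)^(e+1-1) : ℕ)) : ℝ) = x^(e+1) - (x-1)^e := by
    rw [Nat.cast_sub hle]
    congr 1
    · push_cast; ring
    · rw [Nat.cast_pow, Nat.cast_sub (by omega : 1 ≤ Δ)]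
      norm_num [hx]
  rw [hcast]
  simp only [Nat.add_sub_cancel]
  -- step: x^e ≤ exp 1 * (x-1)^e
  have hxe : x^e ≤ Real.exp 1 * (x-1)^e := by
    have hb : x/(x-1) = 1 + 1/(x-1) := by field_simp; ring
    have hb1 : 1 + 1/(x-1) ≤ Real.exp (1/(x-1)) := by
      have := Real.add_one_le_exp (1/(x-1))
      linarith
    have hbpos : (0:ℝ) ≤ 1 + 1/(x-1) := by positivity
    have h2 : (1 + 1/(x-1))^e ≤ Real.exp (1/(x-1)) ^ e := pow_le_pow_left₀ hbpos hb1 e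
    have h3 : Real.exp (1/(x-1)) ^ e = Real.exp (e * (1/(x-1))) := by
      rw [← Real.exp_nat_mul]
    have h4 : Real.exp ((e:ℝ) * (1/(x-1))) ≤ Real.exp 1 := by
      apply Real.exp_le_exp.2
      rw [mul_one_div, div_le_one hxm1]
      exact heΔ
    have h5 : (x/(x-1))^e ≤ Real.exp 1 := by
      rw [hb]; exact le_trans h2 (h3 ▸ h4)
    have h6 : (x/(x-1))^e * (x-1)^e = x^e := by
      rw [← mul_pow]; congr 1; field_simp
    calc x^e = (x/(x-1))^e * (x-1)^e := h6.symm
      _ ≤ Real.exp 1 * (x-1)^e := by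
          refine mul_le_mul_of_nonneg_right h5 (by positivity)
  -- step: m ≤ (1 - 1/(exp 1 * x)) * x^(e+1)
  have hA : x^(e+1) - (x-1)^e ≤ (1 - 1/(Real.exp 1 * x)) * x^(e+1) := by
    have h1 : x^(e+1) / (Real.exp 1 * x) = x^e / Real.exp 1 := by
      rw [pow_succ]
      field_simp
    have h2 : x^e / Real.exp 1 ≤ (x-1)^e := by
      rw [div_le_iff₀ hE0]
      calc x^e ≤ Real.exp 1 * (x-1)^e := hxe
        _ = (x-1)^e * Real.exp 1 := by ring
    have : (1 - 1/(Real.exp 1 * x)) * x^(e+1) = x^(e+1) - x^(e+1)/(Real.exp 1 * x) := by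
      field_simp
    rw [this, h1]
    linarith
  have hm0 : (0:ℝ) ≤ x^(e+1) - (x-1)^e := by
    have h1 : (x-1)^e ≤ x^e := pow_le_pow_left₀ hxm1.le (by linarith) e
    have h2 : x^e ≤ x^(e+1) := pow_le_pow_right₀ hx1.le (by omega)
    linarith
  have hAfrac0 : (0:ℝ) ≤ 1 - 1/(Real.exp 1 * x) := by
    have : 1/(Real.exp 1 * x) ≤ 1/1 := by
      apply one_div_le_one_div_of_le
      · norm_num
      · nlinarith [Real.add_one_le_exp (1:ℝ)]
    linarith
  -- power step
  have hpowle : (x^(e+1) - (x-1)^e)^C ≤ (1 - 1/(Real.exp 1 * x))^C * (x^(e+1))^C := by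
    calc (x^(e+1) - (x-1)^e)^C ≤ ((1 - 1/(Real.exp 1 * x)) * x^(e+1))^C :=
          pow_le_pow_left₀ hm0 hA C
      _ = (1 - 1/(Real.exp 1 * x))^C * (x^(e+1))^C := mul_pow _ _ _
  have hexpC : (1 - 1/(Real.exp 1 * x))^C ≤ Real.exp (-(C:ℝ)/(Real.exp 1 * x)) := by
    have h1 : 1 - 1/(Real.exp 1 * x) ≤ Real.exp (-(1/(Real.exp 1 * x))) := by
      have := Real.add_one_le_exp (-(1/(Real.exp 1 * x)))
      linarith
    calc (1 - 1/(Real.exp 1 * x))^C ≤ Real.exp (-(1/(Real.exp 1 * x)))^C :=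
          pow_le_pow_left₀ hAfrac0 h1 C
      _ = Real.exp ((C:ℝ) * (-(1/(Real.exp 1 * x)))) := by rw [← Real.exp_nat_mul]
      _ = Real.exp (-(C:ℝ)/(Real.exp 1 * x)) := by congr 1; field_simp
  -- lower bound for (1 - 1/(2x))^e
  have h2x1 : (0:ℝ) < 2*x - 1 := by linarith
  have hs : Real.exp (-(1/2) : ℝ) ≤ (1 - 1/(2*x))^e := by
    have hstep : Real.exp (-(1/(2*x-1))) ≤ 1 - 1/(2*x) := by
      have hb1 : (2*x)/(2*x-1) ≤ Real.exp (1/(2*x-1)) := by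
        have h1 := Real.add_one_le_exp (1/(2*x-1))
        have h2 : (2*x)/(2*x-1) = 1/(2*x-1) + 1 := by
          field_simp
          ring
        rw [h2]
        exact h1
      have hapos : (0:ℝ) < (2*x)/(2*x-1) := by positivity
      have := inv_anti₀ hapos hb1
      rw [← Real.exp_neg] at this
      calc Real.exp (-(1/(2*x-1))) ≤ ((2*x)/(2*x-1))⁻¹ := this
        _ = 1 - 1/(2*x) := by
            rw [inv_div]
            field_simp
    have hp : Real.exp (-(1/(2*x-1)))^e ≤ (1 - 1/(2*x))^e :=
      pow_le_pow_left₀ (Real.exp_pos _).le hstep e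
    have he2 : Real.exp (-(1/2) : ℝ) ≤ Real.exp (-(1/(2*x-1)))^e := by
      rw [← Real.exp_nat_mul]
      apply Real.exp_le_exp.2
      rw [mul_neg, mul_one_div, neg_le_neg_iff, div_le_div_iff₀ h2x1 (by norm_num : (0:ℝ) < 2)]
      nlinarith [heΔ]
    exact le_trans he2 hp
  -- the exponential comparison
  have hexp2 : Real.exp (-(C:ℝ)/(Real.exp 1 * x)) * (2*x^3) ≤ Real.exp (-(1/2) : ℝ) := by
    have hpos23 : (0:ℝ) < 2*x^3 := by positivity
    rw [← Real.exp_log hpos23, ← Real.exp_add]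
    apply Real.exp_le_exp.2
    have hlog : Real.log (2*x^3) = Real.log 2 + 3 * Real.log x := by
      rw [Real.log_mul (by norm_num) (by positivity), Real.log_pow]
      norm_num
    have hL2 : Real.log 2 ≤ Real.log x := Real.log_le_log (by norm_num) hx2
    have hL2' : (0.6931471803:ℝ) < Real.log 2 := Real.log_two_gt_d9
    have hL2ub : Real.log 2 < 0.6931471808 := Real.log_two_lt_d9
    have hLpos : (0:ℝ) < Real.log x := lt_of_lt_of_le (by linarith) hL2
    have hCdiv : 27 * Real.log x / Real.exp 1 ≤ (C:ℝ)/(Real.exp 1 * x) := by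
      rw [div_le_div_iff₀ hE0 (by positivity)]
      calc 27 * Real.log x * (Real.exp 1 * x) = (27 * x * Real.log x) * Real.exp 1 := by
            rw [hx]; ring
        _ ≤ (C:ℝ) * Real.exp 1 := mul_le_mul_of_nonneg_right (by rw [hx] at hC ⊢; exact hC) hE0.le
    have hfin : Real.log 2 + 3 * Real.log x + 1/2 ≤ 27 * Real.log x / Real.exp 1 := by
      rw [le_div_iff₀ hE0]
      have e3 : 3*Real.log x*Real.exp 1 ≤ 3*Real.log x*2.7182818286 :=
        mul_le_mul_of_nonneg_left hE (by positivity)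
      have e4 : (Real.log 2 + 1/2)*Real.exp 1 ≤ (0.6931471808 + 1/2)*2.7182818286 := by
        refine mul_le_mul (by linarith) hE hE0.le (by norm_num)
      calc (Real.log 2 + 3 * Real.log x + 1/2) * Real.exp 1
          = 3*Real.log x*Real.exp 1 + (Real.log 2 + 1/2)*Real.exp 1 := by ring
        _ ≤ 3*Real.log x*2.7182818286 + (0.6931471808 + 1/2)*2.7182818286 := by linarith
        _ ≤ 27 * Real.log x := by linarith
    rw [hlog, neg_div]
    have : Real.log 2 + 3 * Real.log x + 1/2 ≤ (C:ℝ)/(Real.exp 1 * x) :=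
      le_trans hfin hCdiv
    linarith
  -- assemble
  have hXP0 : (0:ℝ) ≤ (x^(e+1))^C := by positivity
  have hRHS : ((1 - 1/(2*x)) * x^C)^e * x^C = (1 - 1/(2*x))^e * (x^(e+1))^C := by
    rw [mul_pow, ← pow_mul, ← pow_mul, mul_assoc, ← pow_add]
    congr 2
    ring
  rw [hRHS]
  calc (x^(e+1) - (x-1)^e)^C * (2*x^3)
      ≤ ((1 - 1/(Real.exp 1 * x))^C * (x^(e+1))^C) * (2*x^3) := by
        refine mul_le_mul_of_nonneg_right hpowle (by positivity)
    _ ≤ (Real.exp (-(C:ℝ)/(Real.exp 1 * x)) * (x^(e+1))^C) * (2*x^3) := by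
        refine mul_le_mul_of_nonneg_right (mul_le_mul_of_nonneg_right hexpC hXP0) (by positivity)
    _ = (Real.exp (-(C:ℝ)/(Real.exp 1 * x)) * (2*x^3)) * (x^(e+1))^C := by ring
    _ ≤ Real.exp (-(1/2) : ℝ) * (x^(e+1))^C := mul_le_mul_of_nonneg_right hexp2 hXP0
    _ ≤ (1 - 1/(2*x))^e * (x^(e+1))^C := mul_le_mul_of_nonneg_right hs hXP0

end InjAux

/-- If `G` is bipartite with maximum degree `Δ ≥ 2`, then `χ'_inj(G) ≤ ⌈27 Δ ln Δ⌉`. -/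
theorem injChromIndex_le_of_bipartite {V : Type*} [Fintype V] (G : SimpleGraph V)
    [DecidableRel G.Adj] (Δ : ℕ) (hΔ : G.maxDegree = Δ) (hΔ2 : 2 ≤ Δ)
    (hbip : IsBipartiteGraph G) :
    injChromIndex G ≤ ⌈(27 : ℝ) * Δ * Real.log Δ⌉₊ := by
  classical
  obtain ⟨A, hA⟩ := hbip
  set C : ℕ := ⌈(27 : ℝ) * Δ * Real.log Δ⌉₊ with hCdef
  haveI : NeZero Δ := ⟨by omega⟩
  have hΔR1 : (1:ℝ) < (Δ:ℝ) := by exact_mod_cast (by omega : 1 < Δ)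
  have hlogpos : 0 < Real.log Δ := Real.log_pos hΔR1
  have hC0 : 0 < C := by
    rw [hCdef]
    apply Nat.ceil_pos.2
    positivity
  have hC : 27 * (Δ:ℝ) * Real.log Δ ≤ (C:ℝ) := Nat.le_ceil _
  -- get the good palette assignment
  obtain ⟨g, hgood⟩ := InjAux.exists_good (Δ := Δ) (C := C) G (by omega) (le_of_eq hΔ)
    (fun d hd1 hdΔ => InjAux.key_ineq hΔ2 hd1 hdΔ hC)
  -- edge representatives with the A-side first
  have edge_rep : ∀ e ∈ G.edgeSet, ∃ u v : V, e = s(u,v) ∧ u ∈ A ∧ G.Adj u v := by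
    intro e he
    induction e with
    | _ a b =>
      rw [SimpleGraph.mem_edgeSet] at he
      by_cases ha : a ∈ A
      · exact ⟨a, b, rfl, ha, he⟩
      · have hb : b ∈ A := by
          by_contra hbn
          exact ha ((hA he).2 hbn)
        exact ⟨b, a, Sym2.eq_swap, hb, he.symm⟩
  set P : Sym2 V → Fin C → Prop := fun e γ => ∃ u v, e = s(u,v) ∧ u ∈ A ∧ G.Adj u v ∧
    (g u γ).val = 0 ∧ ∀ u', G.Adj u' v → u' ≠ u → (g u' γ).val ≠ 0 with hP
  have hex : ∀ e ∈ G.edgeSet, ∃ γ, P e γ := by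
    intro e he
    obtain ⟨u, v, rfl, hu, huv⟩ := edge_rep e he
    obtain ⟨γ, h1, h2⟩ := hgood u v huv (Finset.subset_univ _)
    exact ⟨γ, u, v, rfl, hu, huv, h1, h2⟩
  set f : Sym2 V → Fin C := fun e => if h : ∃ γ, P e γ then h.choose else ⟨0, hC0⟩ with hf
  have hfP : ∀ e ∈ G.edgeSet, P e (f e) := by
    intro e he
    have h := hex e he
    rw [hf]
    simp only [dif_pos h]
    exact h.choose_spec
  have hcol : IsInjEdgeColoring G f := by
    intro e₁ he₁ e₂ he₂ hconf
    obtain ⟨hne, hcase⟩ := hconf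
    rcases hcase with ⟨hdisj, x, hx, y, hy, hxy⟩ | ⟨a, b, c, hab, hbc, hac, h1, h2⟩
    · obtain ⟨a₁, b₁, he1, ha₁, hadj₁, hz₁, hnz₁⟩ := hfP e₁ he₁
      obtain ⟨a₂, b₂, he2, ha₂, hadj₂, hz₂, hnz₂⟩ := hfP e₂ he₂
      have hb₁ : b₁ ∉ A := (hA hadj₁).1 ha₁
      have hb₂ : b₂ ∉ A := (hA hadj₂).1 ha₂
      have ha₁e2 : a₁ ∉ e₂ := hdisj a₁ (by rw [he1]; exact Sym2.mem_mk_left _ _)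
      have ha₂e2 : a₂ ∈ e₂ := by rw [he2]; exact Sym2.mem_mk_left _ _
      have hne12 : a₁ ≠ a₂ := fun h => ha₁e2 (h ▸ ha₂e2)
      rw [he1, Sym2.mem_iff] at hx
      rw [he2, Sym2.mem_iff] at hy
      intro heq
      rcases hx with h1x | h1x <;> rcases hy with h2y | h2y
      · rw [h1x, h2y] at hxy
        exact ((hA hxy).1 ha₁) ha₂
      · rw [h1x, h2y] at hxy
        have := hnz₂ a₁ hxy hne12
        rw [← heq] at this
        exact this hz₁
      · rw [h1x, h2y] at hxy
        have := hnz₁ a₂ hxy.symm (fun h => hne12 h.symm)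
        rw [heq] at this
        exact this hz₂
      · rw [h1x, h2y] at hxy
        exact hb₁ ((hA hxy).2 hb₂)
    · exfalso
      have i1 := hA hab
      have i2 := hA hbc
      have i3 := hA hac
      tauto
  have hmem : C ∈ {k : ℕ | ∃ f : Sym2 V → Fin k, IsInjEdgeColoring G f} := ⟨f, hcol⟩
  exact Nat.sInf_le hmem
end

section
/- Let G be a finite simple graph, let Y be an independent set of vertices of G, and let X = V(G) ∖ Y. Let X₁ ⊆ X be any subset, let X₂ = { x ∈ X₁ : x has no neighbor in X₁ }, and let J be the set of all edges xy of G with x ∈ X₂ and y ∈ Y such that y has at most one neighbor in X₁. Then J is G-good, i.e., no two distinct edges of J are at distance exactly 1 in G or lie in a common triangle of G. -/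
open SimpleGraph

/-- A set `F` of edges is `G`-good if no two (distinct) edges in `F` conflict. -/
def GGood {V : Type*} (G : SimpleGraph V) (F : Set (Sym2 V)) : Prop :=
  ∀ e₁ ∈ F, ∀ e₂ ∈ F, ¬ EdgeConflict G e₁ e₂

/-- The set `J` produced by one round of the random procedure is `G`-good:
here `Y` is independent, `X₁ ⊆ V ∖ Y`, `X₂` consists of the vertices of `X₁` with no
neighbor in `X₁`, and `J` consists of the edges `xy` with `x ∈ X₂`, `y ∈ Y` such that
`y` has at most one neighbor in `X₁`. -/
theorem good_set_of_random_round {V : Type*} (G : SimpleGraph V)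
    (Y : Set V) (hY : ∀ u ∈ Y, ∀ v ∈ Y, ¬ G.Adj u v)
    (X₁ : Set V) (hX₁ : X₁ ⊆ Yᶜ)
    (X₂ : Set V) (hX₂ : X₂ = {x ∈ X₁ | ∀ x' ∈ X₁, ¬ G.Adj x x'})
    (J : Set (Sym2 V))
    (hJ : J = {e | e ∈ G.edgeSet ∧ ∃ x y : V, e = s(x, y) ∧ x ∈ X₂ ∧ y ∈ Y ∧
      {x' ∈ X₁ | G.Adj y x'}.Subsingleton}) :
    GGood G J := by
  subst hX₂ hJ
  rintro e₁ ⟨he₁, x₁, y₁, rfl, ⟨hx₁X, hx₁⟩, hy₁Y, hsub₁⟩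
           e₂ ⟨he₂, x₂, y₂, rfl, ⟨hx₂X, hx₂⟩, hy₂Y, hsub₂⟩
           ⟨hne, hcase⟩
  rw [SimpleGraph.mem_edgeSet] at he₁ he₂
  rcases hcase with ⟨hdisj, u, hu, v, hv, huv⟩ | ⟨a, b, c, hab, hbc, hac, h1, h2⟩
  · rw [Sym2.mem_iff] at hu hv
    rcases hu with rfl | rfl <;> rcases hv with rfl | rfl
    · exact hx₁ v hx₂X huv
    · -- u = x₁, v = y₂ : both x₁ and x₂ are neighbors of y₂ in X₁
      have hx1 : u ∈ {x' ∈ X₁ | G.Adj v x'} := ⟨hx₁X, huv.symm⟩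
      have hx2 : x₂ ∈ {x' ∈ X₁ | G.Adj v x'} := ⟨hx₂X, he₂.symm⟩
      have : u = x₂ := hsub₂ hx1 hx2
      exact hdisj u (Sym2.mem_mk_left _ _) (this ▸ Sym2.mem_mk_left _ _)
    · -- u = y₁, v = x₂
      have hx1 : x₁ ∈ {x' ∈ X₁ | G.Adj u x'} := ⟨hx₁X, he₁.symm⟩
      have hx2 : v ∈ {x' ∈ X₁ | G.Adj u x'} := ⟨hx₂X, huv⟩
      have : x₁ = v := hsub₁ hx1 hx2
      exact hdisj x₁ (Sym2.mem_mk_left _ _) (this ▸ Sym2.mem_mk_left _ _)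
    · exact hY u hy₁Y v hy₂Y huv
  · -- triangle case
    have tri : ∀ p ∈ ({a, b, c} : Set V), ∀ q ∈ ({a, b, c} : Set V),
        p ≠ q → G.Adj p q := by
      simp only [Set.mem_insert_iff, Set.mem_singleton_iff]
      rintro p (rfl | rfl | rfl) q (rfl | rfl | rfl) hpq <;>
        first
          | exact absurd rfl hpq
          | assumption
          | exact hab.symm | exact hbc.symm | exact hac.symm
    have decode : ∀ x y : V, s(x, y) ∈ ({s(a, b), s(b, c), s(a, c)} : Set (Sym2 V)) →
        x ∈ ({a, b, c} : Set V) ∧ y ∈ ({a, b, c} : Set V) := by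
      intro x y h
      simp only [Set.mem_insert_iff, Set.mem_singleton_iff, Sym2.eq_iff] at h ⊢
      rcases h with (⟨rfl, rfl⟩ | ⟨rfl, rfl⟩) | (⟨rfl, rfl⟩ | ⟨rfl, rfl⟩) |
        (⟨rfl, rfl⟩ | ⟨rfl, rfl⟩) <;> simp
    obtain ⟨hx₁t, hy₁t⟩ := decode _ _ h1
    obtain ⟨hx₂t, hy₂t⟩ := decode _ _ h2
    have hxx : x₁ = x₂ := by
      by_contra hxx
      exact hx₁ x₂ hx₂X (tri _ hx₁t _ hx₂t hxx)
    have hyy : y₁ ≠ y₂ := by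
      rintro rfl
      exact hne (by rw [hxx])
    exact hY y₁ hy₁Y y₂ hy₂Y (tri _ hy₁t _ hy₂t hyy)
end

section
/- For every finite simple graph G, every G-good set of edges has size at most the independence number α(G); consequently, if G has at least one vertex, then χ'_inj(G) ≥ |E(G)|/α(G). -/
open SimpleGraph

/-- The independence number of `G`. -/
noncomputable def indepNum {V : Type*} (G : SimpleGraph V) : ℕ :=
  sSup {n : ℕ | ∃ s : Set V, n = s.ncard ∧ ∀ u ∈ s, ∀ v ∈ s, ¬ G.Adj u v}


private lemma shared_endpoint_unique {V : Type*} {G : SimpleGraph V} {F : Set (Sym2 V)}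
    (hF : F ⊆ G.edgeSet) (hG : GGood G F) {x y : V} (hxy : x ≠ y) (he : s(x, y) ∈ F)
    {e₁ : Sym2 V} (he₁ : e₁ ∈ F) (hne₁ : e₁ ≠ s(x, y)) (hx : x ∈ e₁)
    {e₂ : Sym2 V} (he₂ : e₂ ∈ F) (hne₂ : e₂ ≠ s(x, y)) (hy : y ∈ e₂) : False := by
  classical
  have hxyAdj : G.Adj x y := (G.mem_edgeSet).1 (hF he)
  obtain ⟨w, hsw⟩ : ∃ w, s(x, w) = e₁ := ⟨_, Sym2.other_spec hx⟩
  obtain ⟨z, hsz⟩ : ∃ z, s(y, z) = e₂ := ⟨_, Sym2.other_spec hy⟩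
  have hwx : x ≠ w := by
    intro h
    exact G.not_isDiag_of_mem_edgeSet (hF he₁) (by rw [← hsw, ← h]; exact Sym2.mk_isDiag_iff.2 rfl)
  have hzy : y ≠ z := by
    intro h
    exact G.not_isDiag_of_mem_edgeSet (hF he₂) (by rw [← hsz, ← h]; exact Sym2.mk_isDiag_iff.2 rfl)
  have hwy : w ≠ y := fun h => hne₁ (by rw [← hsw, h])
  have hzx : z ≠ x := fun h => hne₂ (by rw [← hsz, h, Sym2.eq_swap])
  have hxw : G.Adj x w := (G.mem_edgeSet).1 (by rw [hsw]; exact hF he₁)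
  have hyz : G.Adj y z := (G.mem_edgeSet).1 (by rw [hsz]; exact hF he₂)
  by_cases hwz : w = z
  · subst hwz
    refine hG e₁ he₁ e₂ he₂ ⟨?_, Or.inr ⟨x, y, w, hxyAdj, hyz, hxw, ?_, ?_⟩⟩
    · intro h
      rw [← hsw, ← hsz, Sym2.eq_iff] at h
      rcases h with ⟨h1, _⟩ | ⟨h1, h2⟩
      · exact hxy h1
      · exact hwy h2
    · rw [← hsw]
      exact Or.inr (Or.inr rfl)
    · rw [← hsz]
      exact Or.inr (Or.inl rfl)
  · refine hG e₁ he₁ e₂ he₂ ⟨?_, Or.inl ⟨?_, x, hsw ▸ Sym2.mem_mk_left x w, y,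
      hsz ▸ Sym2.mem_mk_left y z, hxyAdj⟩⟩
    · intro h
      have hx2 : x ∈ e₂ := h ▸ hx
      rw [← hsz, Sym2.mem_iff] at hx2
      rcases hx2 with h1 | h1
      · exact hxy h1
      · exact hzx h1.symm
    · intro u hu hu2
      rw [← hsw, Sym2.mem_iff] at hu
      rw [← hsz, Sym2.mem_iff] at hu2
      rcases hu with rfl | rfl <;> rcases hu2 with h | h
      · exact hxy h
      · exact hzx h.symm
      · exact hwy h
      · exact hwz h

private lemma exists_indep_map {V : Type*} {G : SimpleGraph V} {F : Set (Sym2 V)}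
    (hF : F ⊆ G.edgeSet) (hG : GGood G F) :
    ∃ ℓ : Sym2 V → V, (∀ e ∈ F, ℓ e ∈ e) ∧ Set.InjOn ℓ F ∧
      ∀ e₁ ∈ F, ∀ e₂ ∈ F, ¬ G.Adj (ℓ e₁) (ℓ e₂) := by
  classical
  set shared : Sym2 V → V → Prop := fun e x => x ∈ e ∧ ∃ e' ∈ F, e' ≠ e ∧ x ∈ e' with hsharedDef
  have hshared_unique : ∀ e ∈ F, ∀ x x', shared e x → shared e x' → x = x' := by
    intro e he x x' ⟨hxe, e', he', hne', hxe'⟩ ⟨hx'e, e'', he'', hne'', hx'e''⟩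
    by_contra hxx'
    have heq : e = s(x, x') := (Sym2.mem_and_mem_iff hxx').1 ⟨hxe, hx'e⟩
    exact shared_endpoint_unique hF hG hxx' (heq ▸ he) he' (heq ▸ hne') hxe'
      he'' (heq ▸ hne'') hx'e''
  set ℓ : Sym2 V → V := fun e =>
    if h : ∃ x, shared e x then Sym2.Mem.other h.choose_spec.1 else e.out.1 with hℓDef
  have hmem : ∀ e ∈ F, ℓ e ∈ e := by
    intro e _
    simp only [hℓDef]
    split_ifs with h
    · exact Sym2.other_mem _
    · exact Sym2.out_fst_mem e
  have hspec : ∀ e ∈ F, ∀ x, shared e x → s(x, ℓ e) = e ∧ ℓ e ≠ x := by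
    intro e he x hsx
    have hpos : ∃ x, shared e x := ⟨x, hsx⟩
    have hcx : hpos.choose = x := hshared_unique e he _ _ hpos.choose_spec hsx
    have h1 : ℓ e = Sym2.Mem.other hpos.choose_spec.1 := by
      simp only [hℓDef]
      rw [dif_pos hpos]
    constructor
    · rw [h1, ← hcx]
      exact Sym2.other_spec hpos.choose_spec.1
    · rw [h1, ← hcx]
      exact Sym2.other_ne (G.not_isDiag_of_mem_edgeSet (hF he)) hpos.choose_spec.1
  refine ⟨ℓ, hmem, ?_, ?_⟩
  · intro e₁ he₁ e₂ he₂ heq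
    by_contra hne
    have hsh : shared e₁ (ℓ e₁) := ⟨hmem e₁ he₁, e₂, he₂, Ne.symm hne, heq ▸ hmem e₂ he₂⟩
    exact (hspec e₁ he₁ _ hsh).2 rfl
  · intro e₁ he₁ e₂ he₂ hadj
    have hℓne : ℓ e₁ ≠ ℓ e₂ := G.ne_of_adj hadj
    have hne : e₁ ≠ e₂ := fun h => hℓne (by rw [h])
    by_cases hc : ∃ c, c ∈ e₁ ∧ c ∈ e₂
    · obtain ⟨c, hc1, hc2⟩ := hc
      have hs1 : shared e₁ c := ⟨hc1, e₂, he₂, Ne.symm hne, hc2⟩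
      have hs2 : shared e₂ c := ⟨hc2, e₁, he₁, hne, hc1⟩
      obtain ⟨heq1, hne1⟩ := hspec e₁ he₁ c hs1
      obtain ⟨heq2, hne2⟩ := hspec e₂ he₂ c hs2
      have hadj1 : G.Adj c (ℓ e₁) := (G.mem_edgeSet).1 (by rw [heq1]; exact hF he₁)
      have hadj2 : G.Adj c (ℓ e₂) := (G.mem_edgeSet).1 (by rw [heq2]; exact hF he₂)
      refine hG e₁ he₁ e₂ he₂ ⟨hne, Or.inr ⟨ℓ e₁, c, ℓ e₂, hadj1.symm, hadj2, hadj, ?_, ?_⟩⟩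
      · exact Or.inl (heq1.symm.trans Sym2.eq_swap)
      · exact Or.inr (Or.inl heq2.symm)
    · push_neg at hc
      exact hG e₁ he₁ e₂ he₂ ⟨hne, Or.inl ⟨hc, ℓ e₁, hmem e₁ he₁, ℓ e₂, hmem e₂ he₂, hadj⟩⟩

private lemma indep_bddAbove {V : Type*} [Fintype V] (G : SimpleGraph V) :
    BddAbove {n : ℕ | ∃ s : Set V, n = s.ncard ∧ ∀ u ∈ s, ∀ v ∈ s, ¬ G.Adj u v} := by
  refine ⟨Fintype.card V, ?_⟩
  rintro n ⟨s, rfl, -⟩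
  calc s.ncard ≤ (Set.univ : Set V).ncard := Set.ncard_le_ncard (Set.subset_univ s) Set.finite_univ
    _ = Fintype.card V := by rw [Set.ncard_univ, Nat.card_eq_fintype_card]

/-- Every `G`-good set of edges has size at most the independence number `α(G)`;
consequently, if `G` has a vertex, then `χ'_inj(G) ≥ |E(G)|/α(G)`. -/
theorem ggood_card_le_indepNum {V : Type*} [Fintype V] (G : SimpleGraph V) :
    (∀ F : Set (Sym2 V), F ⊆ G.edgeSet → GGood G F → F.ncard ≤ _root_.indepNum G) ∧
    (Nonempty V →
      (G.edgeSet.ncard : ℝ) / (_root_.indepNum G : ℝ) ≤ (injChromIndex G : ℝ)) := by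
  classical
  have hpart1 : ∀ F : Set (Sym2 V), F ⊆ G.edgeSet → GGood G F → F.ncard ≤ _root_.indepNum G := by
    intro F hF hG
    obtain ⟨ℓ, hmem, hinj, hind⟩ := exists_indep_map hF hG
    rw [← Set.ncard_image_of_injOn hinj]
    refine le_csSup (indep_bddAbove G) ⟨ℓ '' F, rfl, ?_⟩
    rintro u ⟨e₁, he₁, rfl⟩ v ⟨e₂, he₂, rfl⟩
    exact hind e₁ he₁ e₂ he₂
  refine ⟨hpart1, ?_⟩
  intro hne
  haveI : Fintype (Sym2 V) := Fintype.ofFinite _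
  have hSne : {k : ℕ | ∃ f : Sym2 V → Fin k, IsInjEdgeColoring G f}.Nonempty := by
    refine ⟨Fintype.card (Sym2 V), Fintype.equivFin (Sym2 V), ?_⟩
    intro e₁ _ e₂ _ hc heq
    exact hc.1 ((Fintype.equivFin (Sym2 V)).injective heq)
  set k := injChromIndex G with hk
  set α := _root_.indepNum G with hα
  obtain ⟨f, hf⟩ : k ∈ {k : ℕ | ∃ f : Sym2 V → Fin k, IsInjEdgeColoring G f} :=
    Nat.sInf_mem hSne
  have hα1 : 1 ≤ α := by
    obtain ⟨v⟩ := hne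
    refine le_csSup (indep_bddAbove G) ⟨{v}, (Set.ncard_singleton v).symm, ?_⟩
    intro u hu w hw
    rw [Set.mem_singleton_iff] at hu hw
    subst hu; subst hw
    exact G.irrefl
  have hkey : G.edgeSet.ncard ≤ k * α := by
    set T : Fin k → Finset (Sym2 V) :=
      fun c => G.edgeSet.toFinset.filter (fun e => f e = c) with hT
    have hsub : G.edgeSet.toFinset ⊆ Finset.univ.biUnion T := by
      intro e heE
      exact Finset.mem_biUnion.2 ⟨f e, Finset.mem_univ _, Finset.mem_filter.2 ⟨heE, rfl⟩⟩
    have hclass : ∀ c : Fin k, (T c).card ≤ α := by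
      intro c
      rw [← Set.ncard_coe_finset]
      refine hpart1 _ ?_ ?_
      · intro e heT
        rw [Finset.coe_filter, Set.mem_setOf_eq] at heT
        exact Set.mem_toFinset.1 heT.1
      · intro e₁ h1 e₂ h2 hc
        rw [Finset.coe_filter, Set.mem_setOf_eq] at h1 h2
        exact hf e₁ (Set.mem_toFinset.1 h1.1) e₂ (Set.mem_toFinset.1 h2.1) hc
          (h1.2.trans h2.2.symm)
    calc G.edgeSet.ncard = G.edgeSet.toFinset.card := Set.ncard_eq_toFinset_card' _
      _ ≤ (Finset.univ.biUnion T).card := Finset.card_le_card hsub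
      _ ≤ ∑ c : Fin k, (T c).card := Finset.card_biUnion_le
      _ ≤ ∑ _c : Fin k, α := Finset.sum_le_sum fun c _ => hclass c
      _ = k * α := by simp [Finset.sum_const, Finset.card_univ]
  have hα0 : (0 : ℝ) < (α : ℝ) := by exact_mod_cast hα1
  rw [div_le_iff₀ hα0]
  exact_mod_cast hkey
end

section
/- For every integer Δ ≥ 3 and every integer g ≥ 3, there exists a Δ-regular bipartite finite simple graph G with girth at least g such that the injective chromatic index of G satisfies χ'_inj(G) ≥ Δ. -/
open SimpleGraph

section Aux
open SimpleGraph
variable {V : Type*}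

/-- Splitting a trail at an edge. -/
lemma walk_split_at_edge {H : SimpleGraph V} {a b x y : V} (W : H.Walk a b)
    (ht : W.IsTrail) (he : s(x,y) ∈ W.edges) :
    (∃ (w1 : H.Walk a x) (w2 : H.Walk y b), w1.length + 1 + w2.length = W.length ∧
      s(x,y) ∉ w1.edges ∧ s(x,y) ∉ w2.edges ∧ w1.edges ⊆ W.edges ∧ w2.edges ⊆ W.edges) ∨
    (∃ (w1 : H.Walk a y) (w2 : H.Walk x b), w1.length + 1 + w2.length = W.length ∧
      s(x,y) ∉ w1.edges ∧ s(x,y) ∉ w2.edges ∧ w1.edges ⊆ W.edges ∧ w2.edges ⊆ W.edges) := by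
  induction W with
  | nil => simp at he
  | @cons a c b h W' ih =>
    rw [SimpleGraph.Walk.isTrail_cons] at ht
    rw [SimpleGraph.Walk.edges_cons] at he
    rcases List.mem_cons.mp he with hfe | he'
    · -- first edge is the edge
      have hne : s(x,y) ∉ W'.edges := by rw [hfe]; exact ht.2
      rcases Sym2.eq_iff.mp hfe.symm with ⟨hx, hy⟩ | ⟨hx, hy⟩
      · subst hx; subst hy
        exact Or.inl ⟨SimpleGraph.Walk.nil, W', by simp; omega, by simp, hne, by simp, by simp⟩
      · subst hx; subst hy
        exact Or.inr ⟨SimpleGraph.Walk.nil, W', by simp; omega, by simp, hne, by simp, by simp⟩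
    · have hxyac : s(x,y) ≠ s(a,c) := by
        intro hcon; rw [hcon] at he'; exact ht.2 he'
      rcases ih ht.1 he' with ⟨w1, w2, hlen, h1, h2, hs1, hs2⟩ | ⟨w1, w2, hlen, h1, h2, hs1, hs2⟩
      · left
        refine ⟨SimpleGraph.Walk.cons h w1, w2, by simp [Walk.length_cons]; omega, ?_, h2, ?_, ?_⟩
        · rw [SimpleGraph.Walk.edges_cons]
          intro hmem
          rcases List.mem_cons.mp hmem with h' | h'
          · exact hxyac h'
          · exact h1 h'
        · rw [SimpleGraph.Walk.edges_cons, SimpleGraph.Walk.edges_cons]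
          exact List.cons_subset_cons _ hs1
        · rw [SimpleGraph.Walk.edges_cons]
          exact List.subset_cons_of_subset _ hs2
      · right
        refine ⟨SimpleGraph.Walk.cons h w1, w2, by simp [Walk.length_cons]; omega, ?_, h2, ?_, ?_⟩
        · rw [SimpleGraph.Walk.edges_cons]
          intro hmem
          rcases List.mem_cons.mp hmem with h' | h'
          · exact hxyac h'
          · exact h1 h'
        · rw [SimpleGraph.Walk.edges_cons, SimpleGraph.Walk.edges_cons]
          exact List.cons_subset_cons _ hs1
        · rw [SimpleGraph.Walk.edges_cons]
          exact List.subset_cons_of_subset _ hs2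
lemma edges_in_base {H : SimpleGraph V} {p q a b : V} {w : (H ⊔ fromEdgeSet {s(p,q)}).Walk a b}
    (hne : s(p,q) ∉ w.edges) : ∀ e ∈ w.edges, e ∈ H.edgeSet := by
  intro e hew
  have := w.edges_subset_edgeSet hew
  rw [SimpleGraph.edgeSet_sup, SimpleGraph.edgeSet_fromEdgeSet] at this
  rcases this with h | h
  · exact h
  · exfalso; rcases h with ⟨h1, _⟩
    simp only [Set.mem_singleton_iff] at h1
    subst h1; exact hne hew

/-- Adding one edge between far-apart vertices preserves lower girth bounds. -/
lemma egirth_sup_edge {H : SimpleGraph V} {p q : V}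
    {g : ℕ∞} (hg : g ≤ H.egirth) (hd : g ≤ H.edist p q + 1) :
    g ≤ (H ⊔ fromEdgeSet {s(p,q)}).egirth := by
  rw [SimpleGraph.le_egirth]
  intro a C hC
  by_cases he : s(p,q) ∈ C.edges
  · obtain hsplit := walk_split_at_edge C hC.isTrail he
    have key : H.edist p q + 1 ≤ (C.length : ℕ∞) := by
      rcases hsplit with ⟨w1, w2, hlen, h1, h2, hs1, hs2⟩ | ⟨w1, w2, hlen, h1, h2, hs1, hs2⟩
      · -- w1 : a → p, w2 : q → a  (avoid e), so walk q → p of length w1+w2 in H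
        have hw2 : ∀ e ∈ w2.edges, e ∈ H.edgeSet := fun e h => edges_in_base h2 e h
        have hw1 : ∀ e ∈ w1.edges, e ∈ H.edgeSet := fun e h => edges_in_base h1 e h
        have h3 : H.edist p q ≤ (w2.length + w1.length : ℕ) := by
          rw [SimpleGraph.edist_comm]
          calc H.edist q p ≤ ((w2.transfer H hw2).append (w1.transfer H hw1)).length :=
                SimpleGraph.edist_le _
          _ = (w2.length + w1.length : ℕ) := by
            simp [SimpleGraph.Walk.length_append, SimpleGraph.Walk.length_transfer]
        calc H.edist p q + 1 ≤ ((w2.length + w1.length : ℕ) : ℕ∞) + 1 := by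
              exact add_le_add h3 le_rfl
        _ = ((w1.length + 1 + w2.length : ℕ) : ℕ∞) := by push_cast; ring
        _ = (C.length : ℕ∞) := by rw [hlen]
      · have hw2 : ∀ e ∈ w2.edges, e ∈ H.edgeSet := fun e h => edges_in_base h2 e h
        have hw1 : ∀ e ∈ w1.edges, e ∈ H.edgeSet := fun e h => edges_in_base h1 e h
        have h3 : H.edist p q ≤ (w2.length + w1.length : ℕ) := by
          calc H.edist p q ≤ ((w2.transfer H hw2).append (w1.transfer H hw1)).length :=
                SimpleGraph.edist_le _
          _ = (w2.length + w1.length : ℕ) := by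
            simp [SimpleGraph.Walk.length_append, SimpleGraph.Walk.length_transfer]
        calc H.edist p q + 1 ≤ ((w2.length + w1.length : ℕ) : ℕ∞) + 1 := by
              exact add_le_add h3 le_rfl
        _ = ((w1.length + 1 + w2.length : ℕ) : ℕ∞) := by push_cast; ring
        _ = (C.length : ℕ∞) := by rw [hlen]
    exact le_trans hd key
  · have hw : ∀ e ∈ C.edges, e ∈ H.edgeSet := fun e h => edges_in_base he e h
    have hC' : (C.transfer H hw).IsCycle := hC.transfer hw
    have := SimpleGraph.le_egirth.mp hg a (C.transfer H hw) hC'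
    rwa [SimpleGraph.Walk.length_transfer] at this

/-- In a graph of girth ≥ g, after deleting an edge its endpoints are still at distance ≥ g-1. -/
lemma edist_deleteEdge_ge {H : SimpleGraph V} {x y : V} (hadj : H.Adj x y)
    {g : ℕ∞} (hg : g ≤ H.egirth) :
    g ≤ (H.deleteEdges {s(x,y)}).edist x y + 1 := by
  classical
  by_cases hr : (H.deleteEdges {s(x,y)}).edist x y = ⊤
  · rw [hr]; simp
  · obtain ⟨P, hP⟩ := SimpleGraph.exists_walk_of_edist_ne_top hr
    set P' := P.bypass with hP'def
    have hPp : P'.IsPath := P.bypass_isPath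
    have hle : P'.length ≤ P.length := P.length_bypass_le
    have hsub : ∀ e ∈ P'.edges, e ∈ H.edgeSet := by
      intro e hmem
      have := P'.edges_subset_edgeSet hmem
      exact SimpleGraph.edgeSet_mono (SimpleGraph.deleteEdges_le _) this
    have hxy_not : s(y,x) ∉ P'.edges := by
      intro hmem
      have := P'.edges_subset_edgeSet hmem
      rw [SimpleGraph.edgeSet_deleteEdges] at this
      apply this.2
      simp [Sym2.eq_swap]
    have hQp : (P'.transfer H hsub).IsPath := hPp.transfer hsub
    have hQe : s(y,x) ∉ (P'.transfer H hsub).edges := by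
      rwa [SimpleGraph.Walk.edges_transfer]
    have hcyc : (SimpleGraph.Walk.cons hadj.symm (P'.transfer H hsub)).IsCycle :=
      (SimpleGraph.Walk.cons_isCycle_iff _ hadj.symm).mpr ⟨hQp, hQe⟩
    have h5 := SimpleGraph.le_egirth.mp hg y (SimpleGraph.Walk.cons hadj.symm _) hcyc
    rw [SimpleGraph.Walk.length_cons] at h5
    have hlq : (P'.transfer H hsub).length = P'.length := SimpleGraph.Walk.length_transfer _ _
    calc g ≤ (((P'.transfer H hsub).length + 1 : ℕ) : ℕ∞) := h5
    _ ≤ ((P.length + 1 : ℕ) : ℕ∞) := by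
        have : (P'.transfer H hsub).length + 1 ≤ P.length + 1 := by omega
        exact_mod_cast this
    _ = (H.deleteEdges {s(x,y)}).edist x y + 1 := by rw [← hP]; push_cast; ring
/-- Lower bound for distances after adding one edge. -/
lemma edist_sup_edge_lower (H : SimpleGraph V) (p q a b : V) :
    H.edist a b ≤ (H ⊔ fromEdgeSet {s(p,q)}).edist a b ∨
    H.edist a p + 1 + H.edist q b ≤ (H ⊔ fromEdgeSet {s(p,q)}).edist a b ∨
    H.edist a q + 1 + H.edist p b ≤ (H ⊔ fromEdgeSet {s(p,q)}).edist a b := by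
  classical
  set H' := H ⊔ fromEdgeSet {s(p,q)} with hH'
  by_cases hr : H'.edist a b = ⊤
  · left; rw [hr]; exact le_top
  · obtain ⟨P, hP⟩ := SimpleGraph.exists_walk_of_edist_ne_top hr
    set P' := P.bypass with hP'def
    have hPp : P'.IsPath := P.bypass_isPath
    have hle : (P'.length : ℕ∞) ≤ H'.edist a b := by
      rw [← hP]; exact_mod_cast P.length_bypass_le
    by_cases he : s(p,q) ∈ P'.edges
    · rcases walk_split_at_edge P' hPp.isTrail he with
        ⟨w1, w2, hlen, h1, h2, _, _⟩ | ⟨w1, w2, hlen, h1, h2, _, _⟩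
      · right; left
        have hw1 : ∀ e ∈ w1.edges, e ∈ H.edgeSet := fun e h => edges_in_base h1 e h
        have hw2 : ∀ e ∈ w2.edges, e ∈ H.edgeSet := fun e h => edges_in_base h2 e h
        have e1 : H.edist a p ≤ (w1.length : ℕ∞) := by
          calc H.edist a p ≤ ((w1.transfer H hw1).length : ℕ) := SimpleGraph.edist_le _
          _ = (w1.length : ℕ) := by rw [SimpleGraph.Walk.length_transfer]
        have e2 : H.edist q b ≤ (w2.length : ℕ∞) := by
          calc H.edist q b ≤ ((w2.transfer H hw2).length : ℕ) := SimpleGraph.edist_le _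
          _ = (w2.length : ℕ) := by rw [SimpleGraph.Walk.length_transfer]
        calc H.edist a p + 1 + H.edist q b ≤ (w1.length : ℕ∞) + 1 + (w2.length : ℕ∞) := by
              exact add_le_add (add_le_add e1 le_rfl) e2
        _ = ((w1.length + 1 + w2.length : ℕ) : ℕ∞) := by push_cast; ring
        _ = (P'.length : ℕ∞) := by rw [hlen]
        _ ≤ H'.edist a b := hle
      · right; right
        have hw1 : ∀ e ∈ w1.edges, e ∈ H.edgeSet := fun e h => edges_in_base h1 e h
        have hw2 : ∀ e ∈ w2.edges, e ∈ H.edgeSet := fun e h => edges_in_base h2 e h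
        have e1 : H.edist a q ≤ (w1.length : ℕ∞) := by
          calc H.edist a q ≤ ((w1.transfer H hw1).length : ℕ) := SimpleGraph.edist_le _
          _ = (w1.length : ℕ) := by rw [SimpleGraph.Walk.length_transfer]
        have e2 : H.edist p b ≤ (w2.length : ℕ∞) := by
          calc H.edist p b ≤ ((w2.transfer H hw2).length : ℕ) := SimpleGraph.edist_le _
          _ = (w2.length : ℕ) := by rw [SimpleGraph.Walk.length_transfer]
        calc H.edist a q + 1 + H.edist p b ≤ (w1.length : ℕ∞) + 1 + (w2.length : ℕ∞) := by
              exact add_le_add (add_le_add e1 le_rfl) e2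
        _ = ((w1.length + 1 + w2.length : ℕ) : ℕ∞) := by push_cast; ring
        _ = (P'.length : ℕ∞) := by rw [hlen]
        _ ≤ H'.edist a b := hle
    · left
      have hw : ∀ e ∈ P'.edges, e ∈ H.edgeSet := fun e h => edges_in_base he e h
      calc H.edist a b ≤ ((P'.transfer H hw).length : ℕ) := SimpleGraph.edist_le _
      _ = (P'.length : ℕ) := by rw [SimpleGraph.Walk.length_transfer]
      _ ≤ H'.edist a b := hle
lemma mem_ball_succ {H : SimpleGraph V} {v w : V} {r : ℕ}
    (hw : H.edist v w ≤ (r+1 : ℕ)) :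
    H.edist v w ≤ (r : ℕ) ∨ ∃ u, H.edist v u ≤ (r : ℕ) ∧ w ∈ H.neighborSet u := by
  by_cases h : H.edist v w ≤ (r : ℕ)
  · exact Or.inl h
  · right
    have hne : H.edist v w ≠ ⊤ := by
      intro hcon; rw [hcon] at hw
      exact (ENat.coe_ne_top (r+1)) (top_le_iff.mp hw)
    obtain ⟨P, hP⟩ := SimpleGraph.exists_walk_of_edist_ne_top hne
    have hlen : P.length ≤ r + 1 := by
      have := hP ▸ hw; exact_mod_cast this
    have hlen2 : r < P.length := by
      by_contra hc
      push_neg at hc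
      apply h; rw [← hP]; exact_mod_cast hc
    cases hQ : P.reverse with
    | nil =>
      exfalso
      have := SimpleGraph.Walk.length_reverse P
      rw [hQ] at this; simp at this; omega
    | cons hadj Q' =>
      refine ⟨_, ?_, hadj.symm⟩
      have hQl : Q'.length = P.length - 1 := by
        have := SimpleGraph.Walk.length_reverse P
        rw [hQ] at this; simp at this; omega
      calc H.edist v _ ≤ (Q'.reverse.length : ℕ) := SimpleGraph.edist_le _
      _ ≤ (r : ℕ∞) := by
          rw [SimpleGraph.Walk.length_reverse]
          have : Q'.length ≤ r := by omega
          exact_mod_cast this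

lemma ball_ncard_le [Finite V] (H : SimpleGraph V) (Δ : ℕ)
    (hdeg : ∀ v, (H.neighborSet v).ncard ≤ Δ) (v : V) (r : ℕ) :
    {w | H.edist v w ≤ (r : ℕ)}.ncard ≤ (Δ+1)^(r+1) := by
  classical
  have : Fintype V := Fintype.ofFinite V
  induction r with
  | zero =>
    have hS : {w | H.edist v w ≤ (0 : ℕ)} = {v} := by
      ext w
      simp only [Set.mem_setOf_eq, Set.mem_singleton_iff, Nat.cast_zero, nonpos_iff_eq_zero,
        SimpleGraph.edist_eq_zero_iff]
      exact comm
    rw [hS, Set.ncard_singleton]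
    calc 1 ≤ Δ + 1 := by omega
    _ = (Δ+1)^1 := (pow_one _).symm
  | succ r ih =>
    set S := {w | H.edist v w ≤ (r : ℕ)} with hSdef
    set T := {w | H.edist v w ≤ ((r+1 : ℕ) : ℕ∞)} with hTdef
    set U := (⋃ u ∈ S, H.neighborSet u) with hUdef
    have hSfin : S.Finite := Set.toFinite _
    have hsub : T ⊆ S ∪ U := by
      intro w hw
      rcases mem_ball_succ (by exact_mod_cast hw) with h | ⟨u, hu, hnb⟩
      · exact Or.inl h
      · exact Or.inr (Set.mem_biUnion hu hnb)
    have h1 : T.ncard ≤ S.ncard + U.ncard :=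
      le_trans (Set.ncard_le_ncard hsub (Set.toFinite _)) (Set.ncard_union_le _ _)
    have h2 : U.ncard ≤ S.ncard * Δ := by
      have heq : U = ↑(hSfin.toFinset.biUnion (fun u => (H.neighborSet u).toFinset)) := by
        ext w
        simp only [hUdef, Set.mem_iUnion, Finset.coe_biUnion, Set.Finite.coe_toFinset,
          Set.coe_toFinset, exists_prop]
      rw [heq, Set.ncard_coe_finset]
      calc (hSfin.toFinset.biUnion (fun u => (H.neighborSet u).toFinset)).card
          ≤ ∑ u ∈ hSfin.toFinset, (H.neighborSet u).toFinset.card := Finset.card_biUnion_le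
      _ ≤ ∑ u ∈ hSfin.toFinset, Δ := by
          apply Finset.sum_le_sum
          intro u _
          rw [← Set.ncard_eq_toFinset_card']
          exact hdeg u
      _ = hSfin.toFinset.card * Δ := by rw [Finset.sum_const, smul_eq_mul]
      _ = S.ncard * Δ := by rw [Set.ncard_eq_toFinset_card _ hSfin]
    calc T.ncard ≤ S.ncard + S.ncard * Δ := by omega
    _ = S.ncard * (Δ + 1) := by ring
    _ ≤ (Δ+1)^(r+1) * (Δ+1) := Nat.mul_le_mul_right _ ih
    _ = (Δ+1)^(r+1+1) := by ring
lemma sup_edge_adj (H : SimpleGraph V) {a b u v : V} :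
    (H ⊔ fromEdgeSet {s(a,b)}).Adj u v ↔ H.Adj u v ∨ (s(u,v) = s(a,b) ∧ u ≠ v) := by
  rw [SimpleGraph.sup_adj, SimpleGraph.fromEdgeSet_adj]
  simp [Set.mem_singleton_iff]

lemma sup_edge_neighborSet_left (H : SimpleGraph V) {a b : V} (hab : a ≠ b) :
    (H ⊔ fromEdgeSet {s(a,b)}).neighborSet a = insert b (H.neighborSet a) := by
  ext w
  simp only [SimpleGraph.mem_neighborSet, sup_edge_adj, Set.mem_insert_iff]
  constructor
  · rintro (h | ⟨he, hne⟩)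
    · exact Or.inr h
    · rcases Sym2.eq_iff.mp he with ⟨_, rfl⟩ | ⟨rfl, rfl⟩
      · exact Or.inl rfl
      · exact absurd rfl hne
  · rintro (rfl | h)
    · exact Or.inr ⟨rfl, hab⟩
    · exact Or.inl h

lemma sup_edge_neighborSet_right (H : SimpleGraph V) {a b : V} (hab : a ≠ b) :
    (H ⊔ fromEdgeSet {s(a,b)}).neighborSet b = insert a (H.neighborSet b) := by
  have : s(a,b) = s(b,a) := Sym2.eq_swap
  rw [this]
  exact sup_edge_neighborSet_left H hab.symm

lemma sup_edge_neighborSet_other (H : SimpleGraph V) {a b v : V} (hva : v ≠ a) (hvb : v ≠ b) :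
    (H ⊔ fromEdgeSet {s(a,b)}).neighborSet v = H.neighborSet v := by
  ext w
  simp only [SimpleGraph.mem_neighborSet, sup_edge_adj]
  constructor
  · rintro (h | ⟨he, hne⟩)
    · exact h
    · rcases Sym2.eq_iff.mp he with ⟨rfl, rfl⟩ | ⟨rfl, rfl⟩
      · exact absurd rfl hva
      · exact absurd rfl hvb
  · exact Or.inl

lemma del_edge_neighborSet_left (H : SimpleGraph V) {x y : V} :
    (H.deleteEdges {s(x,y)}).neighborSet x = H.neighborSet x \ {y} := by
  ext w
  simp only [SimpleGraph.mem_neighborSet, SimpleGraph.deleteEdges_adj, Set.mem_diff,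
    Set.mem_singleton_iff]
  constructor
  · rintro ⟨h, hne⟩
    refine ⟨h, fun hw => hne ?_⟩
    subst hw; rfl
  · rintro ⟨h, hne⟩
    refine ⟨h, fun he2 => ?_⟩
    rcases Sym2.eq_iff.mp he2 with ⟨-, rfl⟩ | ⟨rfl, rfl⟩
    · exact hne rfl
    · exact H.irrefl h
lemma del_edge_neighborSet_right (H : SimpleGraph V) {x y : V} :
    (H.deleteEdges {s(x,y)}).neighborSet y = H.neighborSet y \ {x} := by
  have : s(x,y) = s(y,x) := Sym2.eq_swap
  rw [this]
  exact del_edge_neighborSet_left H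

lemma del_edge_neighborSet_other (H : SimpleGraph V) {x y v : V} (hvx : v ≠ x) (hvy : v ≠ y) :
    (H.deleteEdges {s(x,y)}).neighborSet v = H.neighborSet v := by
  ext w
  simp only [SimpleGraph.mem_neighborSet, SimpleGraph.deleteEdges_adj, Set.mem_singleton_iff]
  constructor
  · exact fun h => h.1
  · intro h
    refine ⟨h, fun he => ?_⟩
    rcases Sym2.eq_iff.mp he with ⟨rfl, rfl⟩ | ⟨rfl, rfl⟩
    · exact hvx rfl
    · exact hvy rfl

lemma sup_edge_edgeSet (H : SimpleGraph V) {a b : V} (hab : a ≠ b) :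
    (H ⊔ fromEdgeSet {s(a,b)}).edgeSet = insert s(a,b) H.edgeSet := by
  rw [SimpleGraph.edgeSet_sup, SimpleGraph.edgeSet_fromEdgeSet]
  have h2 : ({s(a,b)} : Set (Sym2 V)) \ {e | e.IsDiag} = {s(a,b)} := by
    ext e
    simp only [Set.mem_diff, Set.mem_singleton_iff, Set.mem_setOf_eq, and_iff_left_iff_imp]
    rintro rfl
    simp [hab]
  rw [Sym2.diagSet_eq_setOfPred_isDiag, h2, Set.union_comm, Set.singleton_union]

lemma del_edge_edgeSet (H : SimpleGraph V) {e : Sym2 V} :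
    (H.deleteEdges {e}).edgeSet = H.edgeSet \ {e} := by
  rw [SimpleGraph.edgeSet_deleteEdges]
lemma ncard_neighborSet_eq_degree {W : Type*} [Fintype W] (G : SimpleGraph W)
    [DecidableRel G.Adj] (v : W) : (G.neighborSet v).ncard = G.degree v := by
  rw [← Nat.card_coe_set_eq, Nat.card_eq_fintype_card]
  exact SimpleGraph.card_neighborSet_eq_degree G v

lemma sum_incidence {α : Type*} [DecidableEq α] (T : Finset α) (S : Finset (Sym2 α)) :
    ∑ v ∈ T, (S.filter (fun e => v ∈ e)).card = ∑ e ∈ S, (T.filter (fun v => v ∈ e)).card := by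
  simp only [Finset.card_filter]
  exact Finset.sum_comm

lemma endpoints_filter_card {α : Type*} [DecidableEq α] (T : Finset α) {x y : α} (hxy : x ≠ y) :
    (T.filter (fun v => v ∈ s(x,y))).card =
      (if x ∈ T then 1 else 0) + (if y ∈ T then 1 else 0) := by
  have : T.filter (fun v => v ∈ s(x,y)) = ({x,y} : Finset α) ∩ T := by
    ext v
    simp only [Finset.mem_filter, Sym2.mem_iff, Finset.mem_inter, Finset.mem_insert,
      Finset.mem_singleton]
    tauto
  rw [this]
  by_cases hx : x ∈ T <;> by_cases hy : y ∈ T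
  · have : ({x,y} : Finset α) ∩ T = {x,y} := by
      apply Finset.inter_eq_left.mpr
      intro v hv
      rcases Finset.mem_insert.mp hv with rfl | hv
      · exact hx
      · rw [Finset.mem_singleton.mp hv]; exact hy
    rw [this, hx |> if_pos, hy |> if_pos, Finset.card_pair hxy]
  · have : ({x,y} : Finset α) ∩ T = {x} := by
      ext v
      simp only [Finset.mem_inter, Finset.mem_insert, Finset.mem_singleton]
      constructor
      · rintro ⟨rfl | rfl, hvT⟩
        · rfl
        · exact absurd hvT hy
      · rintro rfl; exact ⟨Or.inl rfl, hx⟩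
    rw [this, if_pos hx, if_neg hy, Finset.card_singleton]
  · have : ({x,y} : Finset α) ∩ T = {y} := by
      ext v
      simp only [Finset.mem_inter, Finset.mem_insert, Finset.mem_singleton]
      constructor
      · rintro ⟨rfl | rfl, hvT⟩
        · exact absurd hvT hx
        · rfl
      · rintro rfl; exact ⟨Or.inr rfl, hy⟩
    rw [this, if_neg hx, if_pos hy, Finset.card_singleton]
  · have : ({x,y} : Finset α) ∩ T = ∅ := by
      ext v
      simp only [Finset.mem_inter, Finset.mem_insert, Finset.mem_singleton,
        Finset.notMem_empty, iff_false]
      rintro ⟨rfl | rfl, hvT⟩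
      · exact hx hvT
      · exact hy hvT
    rw [this, if_neg hx, if_neg hy, Finset.card_empty]
lemma single_edge_le {Kb : SimpleGraph V} {a b : V} (h : Kb.Adj a b) :
    fromEdgeSet {s(a,b)} ≤ Kb := by
  intro u v huv
  rw [SimpleGraph.fromEdgeSet_adj] at huv
  obtain ⟨hmem, hne⟩ := huv
  rw [Set.mem_singleton_iff] at hmem
  rcases Sym2.eq_iff.mp hmem with ⟨rfl, rfl⟩ | ⟨rfl, rfl⟩
  · exact h
  · exact h.symm

lemma add_edge_in_family [Finite V] {Kb : SimpleGraph V} {Δ g : ℕ} (hg3 : 3 ≤ g)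
    {G : SimpleGraph V} (hKb : G ≤ Kb) (hdeg : ∀ v, (G.neighborSet v).ncard ≤ Δ)
    (hgirth : (g:ℕ∞) ≤ G.egirth)
    {a b : V} (hKadj : Kb.Adj a b)
    (hda : (G.neighborSet a).ncard < Δ) (hdb : (G.neighborSet b).ncard < Δ)
    (hd : (g:ℕ∞) ≤ G.edist a b + 1) :
    (G ⊔ fromEdgeSet {s(a,b)}) ≤ Kb ∧
    (∀ v, ((G ⊔ fromEdgeSet {s(a,b)}).neighborSet v).ncard ≤ Δ) ∧
    (g:ℕ∞) ≤ (G ⊔ fromEdgeSet {s(a,b)}).egirth ∧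
    (G ⊔ fromEdgeSet {s(a,b)}).edgeSet.ncard = G.edgeSet.ncard + 1 := by
  have hab : a ≠ b := hKadj.ne
  have hnadj : ¬ G.Adj a b := by
    intro hAdj
    have h1 : G.edist a b = 1 := SimpleGraph.edist_eq_one_iff_adj.mpr hAdj
    rw [h1] at hd
    have : g ≤ 2 := by exact_mod_cast hd
    omega
  refine ⟨sup_le hKb (single_edge_le hKadj), ?_, egirth_sup_edge hgirth hd, ?_⟩
  · intro v
    by_cases hva : v = a
    · subst hva
      have hbn : b ∉ G.neighborSet v := fun hc => hnadj hc
      rw [sup_edge_neighborSet_left G hab, Set.ncard_insert_of_notMem hbn (Set.toFinite _)]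
      omega
    · by_cases hvb : v = b
      · subst hvb
        have han : a ∉ G.neighborSet v := fun hc => hnadj (SimpleGraph.Adj.symm hc)
        rw [sup_edge_neighborSet_right G hab, Set.ncard_insert_of_notMem han (Set.toFinite _)]
        omega
      · rw [sup_edge_neighborSet_other G hva hvb]
        exact hdeg v
  · have hen : s(a,b) ∉ G.edgeSet := fun hc => hnadj ((SimpleGraph.mem_edgeSet G).mp hc)
    rw [sup_edge_edgeSet G hab, Set.ncard_insert_of_notMem hen (Set.toFinite _)]

lemma side_sum {W : Type*} [Fintype W] [DecidableEq W] (G : SimpleGraph W)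
    [DecidableRel G.Adj] [Fintype G.edgeSet] (side : W → Prop) [DecidablePred side]
    (hside : ∀ ⦃u v⦄, G.Adj u v → (side u ↔ ¬ side v)) :
    ∑ v ∈ Finset.univ.filter side, G.degree v = G.edgeFinset.card ∧
    ∑ v ∈ Finset.univ.filter (fun v => ¬ side v), G.degree v = G.edgeFinset.card := by
  have hdeg : ∀ v : W, G.degree v = (G.edgeFinset.filter (fun e => v ∈ e)).card := by
    intro v
    rw [← SimpleGraph.card_incidenceFinset_eq_degree, SimpleGraph.incidenceFinset_eq_filter]
  have key : ∀ (T : Finset W), (∀ x y, G.Adj x y → ((if x ∈ T then 1 else 0) +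
      (if y ∈ T then 1 else 0) = 1)) → ∑ v ∈ T, G.degree v = G.edgeFinset.card := by
    intro T hT
    calc ∑ v ∈ T, G.degree v = ∑ v ∈ T, (G.edgeFinset.filter (fun e => v ∈ e)).card := by
          exact Finset.sum_congr rfl fun v _ => hdeg v
    _ = ∑ e ∈ G.edgeFinset, (T.filter (fun v => v ∈ e)).card := sum_incidence T G.edgeFinset
    _ = ∑ _e ∈ G.edgeFinset, 1 := by
        apply Finset.sum_congr rfl
        intro e he
        induction e with
        | h x y =>
          rw [SimpleGraph.mem_edgeFinset, SimpleGraph.mem_edgeSet] at he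
          rw [endpoints_filter_card T he.ne]
          exact hT x y he
    _ = G.edgeFinset.card := by rw [Finset.sum_const, smul_eq_mul, mul_one]
  constructor
  · apply key
    intro x y hxy
    have := hside hxy
    by_cases hx : side x <;> by_cases hy : side y <;> simp [hx, hy] at this ⊢ <;> tauto
  · apply key
    intro x y hxy
    have := hside hxy
    by_cases hx : side x <;> by_cases hy : side y <;> simp [hx, hy] at this ⊢ <;> tauto
lemma exchange_in_family [Finite V] {Kb : SimpleGraph V} {Δ g : ℕ} (hg3 : 3 ≤ g)
    {G : SimpleGraph V} (hKb : G ≤ Kb) (hdeg : ∀ v, (G.neighborSet v).ncard ≤ Δ)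
    (hgirth : (g:ℕ∞) ≤ G.egirth)
    {p q b₀ : V} (hpq : G.Adj p q) (hKpb : Kb.Adj p b₀)
    (hdb₀ : (G.neighborSet b₀).ncard < Δ)
    (hfar_pb : (g:ℕ∞) ≤ G.edist p b₀) (hfar_qb : (g:ℕ∞) ≤ G.edist q b₀) :
    ((G.deleteEdges {s(p,q)}) ⊔ fromEdgeSet {s(p,b₀)}) ≤ Kb ∧
    (∀ v, (((G.deleteEdges {s(p,q)}) ⊔ fromEdgeSet {s(p,b₀)}).neighborSet v).ncard ≤ Δ) ∧
    (g:ℕ∞) ≤ ((G.deleteEdges {s(p,q)}) ⊔ fromEdgeSet {s(p,b₀)}).egirth ∧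
    ((G.deleteEdges {s(p,q)}) ⊔ fromEdgeSet {s(p,b₀)}).edgeSet.ncard = G.edgeSet.ncard ∧
    (((G.deleteEdges {s(p,q)}) ⊔ fromEdgeSet {s(p,b₀)}).neighborSet q).ncard + 1 =
      (G.neighborSet q).ncard ∧
    (∀ v, v ≠ p → v ≠ q → v ≠ b₀ →
      ((G.deleteEdges {s(p,q)}) ⊔ fromEdgeSet {s(p,b₀)}).neighborSet v = G.neighborSet v) := by
  have hgpos : (0:ℕ∞) < g := by
    have : (0:ℕ) < g := by omega
    exact_mod_cast this
  have hbp : b₀ ≠ p := by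
    intro h; subst h
    rw [SimpleGraph.edist_self] at hfar_pb
    exact absurd hfar_pb (by simpa using hgpos.ne')
  have hbq : b₀ ≠ q := by
    intro h; subst h
    rw [SimpleGraph.edist_self] at hfar_qb
    exact absurd hfar_qb (by simpa using hgpos.ne')
  have hpq_ne : p ≠ q := hpq.ne
  have hnadj_pb : ¬ G.Adj p b₀ := by
    intro h
    have h1 : G.edist p b₀ = 1 := SimpleGraph.edist_eq_one_iff_adj.mpr h
    rw [h1] at hfar_pb
    have : g ≤ 1 := by exact_mod_cast hfar_pb
    omega
  set Gd := G.deleteEdges {s(p,q)} with hGd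
  have hGdle : Gd ≤ G := SimpleGraph.deleteEdges_le _
  have hGdgirth : (g:ℕ∞) ≤ Gd.egirth := le_trans hgirth (SimpleGraph.egirth_anti hGdle)
  have hGd_dist : (g:ℕ∞) ≤ Gd.edist p b₀ :=
    le_trans hfar_pb (SimpleGraph.edist_anti hGdle)
  have hq_mem : q ∈ G.neighborSet p := hpq
  have hp_mem : p ∈ G.neighborSet q := hpq.symm
  refine ⟨?_, ?_, ?_, ?_, ?_, ?_⟩
  · exact sup_le (le_trans hGdle hKb) (single_edge_le hKpb)
  · intro v
    by_cases hvp : v = p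
    · subst hvp
      have hbn : b₀ ∉ Gd.neighborSet v := by
        rw [hGd, del_edge_neighborSet_left]
        rintro ⟨hc, -⟩
        exact hnadj_pb hc
      rw [sup_edge_neighborSet_left Gd hbp.symm, Set.ncard_insert_of_notMem hbn (Set.toFinite _),
        hGd, del_edge_neighborSet_left]
      have := Set.ncard_diff_singleton_add_one hq_mem (Set.toFinite _)
      have hdv := hdeg v
      omega
    · by_cases hvb : v = b₀
      · subst hvb
        have hpn : p ∉ Gd.neighborSet v := by
          rw [hGd, del_edge_neighborSet_other G hbp hbq]
          intro hc
          exact hnadj_pb hc.symm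
        rw [sup_edge_neighborSet_right Gd hbp.symm, Set.ncard_insert_of_notMem hpn (Set.toFinite _),
          hGd, del_edge_neighborSet_other G hbp hbq]
        omega
      · rw [sup_edge_neighborSet_other Gd hvp hvb]
        by_cases hvq : v = q
        · subst hvq
          rw [hGd, del_edge_neighborSet_right]
          exact le_trans (Set.ncard_le_ncard Set.diff_subset (Set.toFinite _)) (hdeg v)
        · rw [hGd, del_edge_neighborSet_other G hvp hvq]
          exact hdeg v
  · exact egirth_sup_edge hGdgirth (le_trans hGd_dist le_self_add)
  · have hepb : s(p,b₀) ∉ Gd.edgeSet := by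
      intro hc
      exact hnadj_pb (hGdle ((SimpleGraph.mem_edgeSet Gd).mp hc))
    have hepq : s(p,q) ∈ G.edgeSet := hpq
    rw [sup_edge_edgeSet Gd hbp.symm, Set.ncard_insert_of_notMem hepb (Set.toFinite _),
      hGd, del_edge_edgeSet]
    have := Set.ncard_diff_singleton_add_one hepq (Set.toFinite _)
    omega
  · rw [sup_edge_neighborSet_other Gd (Ne.symm hpq_ne) (Ne.symm hbq), hGd,
      del_edge_neighborSet_right]
    exact Set.ncard_diff_singleton_add_one hp_mem (Set.toFinite _)
  · intro v hvp hvq hvb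
    rw [sup_edge_neighborSet_other Gd hvp hvb, hGd, del_edge_neighborSet_other G hvp hvq]
lemma exists_good_graph (Δ g : ℕ) (hΔ : 3 ≤ Δ) (hg : 3 ≤ g) :
    ∃ (n : ℕ) (G : SimpleGraph (Fin n)), 0 < n ∧ (∀ v, (G.neighborSet v).ncard = Δ) ∧
      (∃ A : Set (Fin n), ∀ ⦃u v⦄, G.Adj u v → (u ∈ A ↔ v ∉ A)) ∧
      (g : ℕ∞) ≤ G.egirth := by
  classical
  set N := (Δ+1)^(3*g+4) with hN
  set n := 2*N with hn
  have hNpos : 0 < N := pow_pos (by omega) _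
  have hNn : N ≤ n := by omega
  have hnpos : 0 < n := by omega
  set sd : Fin n → Prop := fun v => (v : ℕ) < N with hsd
  set Kb : SimpleGraph (Fin n) := SimpleGraph.fromRel (fun u v => sd u ∧ ¬ sd v) with hKbd
  have hKbAdj : ∀ {u v}, Kb.Adj u v ↔ u ≠ v ∧ (sd u ∧ ¬ sd v ∨ sd v ∧ ¬ sd u) := by
    intro u v; rw [hKbd, SimpleGraph.fromRel_adj]
  have hKbmk : ∀ {u v}, sd u → ¬ sd v → Kb.Adj u v := by
    intro u v hu hv
    refine hKbAdj.mpr ⟨?_, Or.inl ⟨hu, hv⟩⟩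
    rintro rfl; exact hv hu
  set Fam : Set (SimpleGraph (Fin n)) :=
    {G | G ≤ Kb ∧ (∀ v, (G.neighborSet v).ncard ≤ Δ) ∧ (g:ℕ∞) ≤ G.egirth} with hFam
  have hbot : (⊥ : SimpleGraph (Fin n)) ∈ Fam := by
    refine ⟨bot_le, ?_, ?_⟩
    · intro v
      have : (⊥ : SimpleGraph (Fin n)).neighborSet v = ∅ := by
        ext w; simp
      rw [this, Set.ncard_empty]; omega
    · rw [SimpleGraph.egirth_bot]; exact le_top
  obtain ⟨Gm, hGmF, hmax⟩ := Set.Finite.exists_maximalFor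
    (fun G : SimpleGraph (Fin n) => G.edgeSet.ncard) Fam (Set.toFinite _) ⟨⊥, hbot⟩
  obtain ⟨hGmK, hGmdeg, hGmgirth⟩ := hGmF
  have hside : ∀ ⦃u v⦄, Gm.Adj u v → (sd u ↔ ¬ sd v) := by
    intro u v huv
    have h2 := (hKbAdj.mp (hGmK huv)).2
    constructor
    · intro hu hv
      rcases h2 with ⟨h3, h4⟩ | ⟨h3, h4⟩
      · exact h4 hv
      · exact h4 hu
    · intro hv
      rcases h2 with ⟨h3, h4⟩ | ⟨h3, h4⟩
      · exact h3
      · exact absurd h3 hv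
  have hreg : ∀ v, (Gm.neighborSet v).ncard = Δ := by
    by_contra hcreg
    push_neg at hcreg
    obtain ⟨v₀, hv₀⟩ := hcreg
    have hv₀' : (Gm.neighborSet v₀).ncard < Δ := lt_of_le_of_ne (hGmdeg v₀) hv₀
    letI : DecidableRel Gm.Adj := Classical.decRel _
    letI : Fintype Gm.edgeSet := Fintype.ofFinite _
    have hdegncard : ∀ v, (Gm.neighborSet v).ncard = Gm.degree v :=
      fun v => ncard_neighborSet_eq_degree Gm v
    have hdegleΔ : ∀ v, Gm.degree v ≤ Δ := fun v => by
      rw [← hdegncard v]; exact hGmdeg v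
    obtain ⟨hsumA, hsumB⟩ := side_sum Gm sd hside
    have hAcard : (Finset.univ.filter sd).card = N := by
      have himg : Finset.univ.filter sd =
          (Finset.univ : Finset (Fin N)).image (fun i => (Fin.castLE hNn i)) := by
        ext v
        constructor
        · intro hv
          have hv' : (v : ℕ) < N := (Finset.mem_filter.mp hv).2
          exact Finset.mem_image.mpr ⟨⟨(v : ℕ), hv'⟩, Finset.mem_univ _, by ext; simp⟩
        · intro hv
          obtain ⟨i, -, rfl⟩ := Finset.mem_image.mp hv
          exact Finset.mem_filter.mpr ⟨Finset.mem_univ _, i.isLt⟩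
      rw [himg, Finset.card_image_of_injective _ (Fin.castLE_injective _), Finset.card_univ,
        Fintype.card_fin]
    have hBcard : (Finset.univ.filter (fun v => ¬ sd v)).card = N := by
      have := Finset.card_filter_add_card_filter_not (s := (Finset.univ : Finset (Fin n)))
        (p := sd)
      rw [hAcard, Finset.card_univ, Fintype.card_fin] at this
      omega
    have hbothdef : (∃ a, sd a ∧ (Gm.neighborSet a).ncard < Δ) ∧
        (∃ b, ¬ sd b ∧ (Gm.neighborSet b).ncard < Δ) := by
      have hAB : ∑ v ∈ Finset.univ.filter sd, Gm.degree v =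
          ∑ v ∈ Finset.univ.filter (fun v => ¬ sd v), Gm.degree v := by
        rw [hsumA, hsumB]
      constructor
      · by_contra hnoA
        push_neg at hnoA
        have hv₀B : ¬ sd v₀ := by
          intro hs
          have := hnoA v₀ hs
          omega
        have hsA : ∑ v ∈ Finset.univ.filter sd, Gm.degree v = N * Δ := by
          have hAfull : ∀ v ∈ Finset.univ.filter sd, Gm.degree v = Δ := by
            intro v hv
            rw [Finset.mem_filter] at hv
            have h1 := hnoA v hv.2
            have h2 := hdegleΔ v
            rw [hdegncard v] at h1
            omega
          rw [Finset.sum_congr rfl hAfull, Finset.sum_const, hAcard, smul_eq_mul]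
        have hsB : ∑ v ∈ Finset.univ.filter (fun v => ¬ sd v), Gm.degree v < N * Δ := by
          calc ∑ v ∈ Finset.univ.filter (fun v => ¬ sd v), Gm.degree v
              < ∑ _v ∈ Finset.univ.filter (fun v => ¬ sd v), Δ := by
                apply Finset.sum_lt_sum (fun i _ => hdegleΔ i)
                refine ⟨v₀, ?_, ?_⟩
                · rw [Finset.mem_filter]; exact ⟨Finset.mem_univ _, hv₀B⟩
                · rw [← hdegncard]; exact hv₀'
          _ = N * Δ := by rw [Finset.sum_const, hBcard, smul_eq_mul]
        omega
      · by_contra hnoB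
        push_neg at hnoB
        have hv₀A : sd v₀ := by
          by_contra hs
          have := hnoB v₀ hs
          omega
        have hsB : ∑ v ∈ Finset.univ.filter (fun v => ¬ sd v), Gm.degree v = N * Δ := by
          have hBfull : ∀ v ∈ Finset.univ.filter (fun v => ¬ sd v), Gm.degree v = Δ := by
            intro v hv
            rw [Finset.mem_filter] at hv
            have h1 := hnoB v hv.2
            have h2 := hdegleΔ v
            rw [hdegncard v] at h1
            omega
          rw [Finset.sum_congr rfl hBfull, Finset.sum_const, hBcard, smul_eq_mul]
        have hsA : ∑ v ∈ Finset.univ.filter sd, Gm.degree v < N * Δ := by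
          calc ∑ v ∈ Finset.univ.filter sd, Gm.degree v
              < ∑ _v ∈ Finset.univ.filter sd, Δ := by
                apply Finset.sum_lt_sum (fun i _ => hdegleΔ i)
                refine ⟨v₀, ?_, ?_⟩
                · rw [Finset.mem_filter]; exact ⟨Finset.mem_univ _, hv₀A⟩
                · rw [← hdegncard]; exact hv₀'
          _ = N * Δ := by rw [Finset.sum_const, hAcard, smul_eq_mul]
        omega
    by_cases hcase : ∃ a b, sd a ∧ ¬ sd b ∧ (Gm.neighborSet a).ncard < Δ ∧
        (Gm.neighborSet b).ncard < Δ ∧ (g:ℕ∞) ≤ Gm.edist a b + 1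
    · obtain ⟨a, b, hsa, hsb, hda, hdb, hd⟩ := hcase
      obtain ⟨f1, f2, f3, f4⟩ := add_edge_in_family hg hGmK hGmdeg hGmgirth
        (hKbmk hsa hsb) hda hdb hd
      have hF : (Gm ⊔ fromEdgeSet {s(a,b)}) ∈ Fam := ⟨f1, f2, f3⟩
      have hle := hmax hF (by beta_reduce; rw [f4]; omega)
      beta_reduce at hle; rw [f4] at hle
      omega
    · push_neg at hcase
      obtain ⟨⟨a₀, hsa₀, hda₀⟩, ⟨b₀, hsb₀, hdb₀⟩⟩ := hbothdef
      have hab_close : Gm.edist b₀ a₀ ≤ (g:ℕ∞) := by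
        have h1 := hcase a₀ b₀ hsa₀ hsb₀ hda₀ hdb₀
        rw [SimpleGraph.edist_comm]
        exact le_of_lt (lt_of_le_of_lt le_self_add h1)
      have hclose : ∀ d, (Gm.neighborSet d).ncard < Δ → Gm.edist b₀ d ≤ ((2*g:ℕ):ℕ∞) := by
        intro d hd
        by_cases hsdd : sd d
        · have h1 := hcase d b₀ hsdd hsb₀ hd hdb₀
          rw [SimpleGraph.edist_comm]
          calc Gm.edist d b₀ ≤ (g:ℕ∞) := le_of_lt (lt_of_le_of_lt le_self_add h1)
          _ ≤ ((2*g:ℕ):ℕ∞) := Nat.cast_le.mpr (by omega)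
        · have h2 := hcase a₀ d hsa₀ hsdd hda₀ hd
          calc Gm.edist b₀ d ≤ Gm.edist b₀ a₀ + Gm.edist a₀ d := Gm.edist_triangle
          _ ≤ (g:ℕ∞) + (g:ℕ∞) :=
              add_le_add hab_close (le_of_lt (lt_of_le_of_lt le_self_add h2))
          _ = ((2*g:ℕ):ℕ∞) := by push_cast; ring
      have hball := ball_ncard_le Gm Δ hGmdeg b₀ (3*g+2)
      have hey : ∃ y, ¬ (Gm.edist b₀ y ≤ ((3*g+2:ℕ):ℕ∞)) := by
        by_contra hally
        push_neg at hally
        have huniv : {w | Gm.edist b₀ w ≤ ((3*g+2:ℕ):ℕ∞)} = Set.univ :=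
          Set.eq_univ_of_forall hally
        rw [huniv, Set.ncard_univ, Nat.card_eq_fintype_card, Fintype.card_fin] at hball
        have hpow : (Δ+1)^(3*g+2+1) < N := by
          rw [hN]
          exact Nat.pow_lt_pow_right (by omega) (by omega)
        omega
      obtain ⟨y, hy⟩ := hey
      have hy2 : ¬ (Gm.edist b₀ y ≤ ((3*g+1:ℕ):ℕ∞)) := by
        intro h
        exact hy (le_trans h (Nat.cast_le.mpr (by omega)))
      have hy_deg : (Gm.neighborSet y).ncard = Δ := by
        refine le_antisymm (hGmdeg y) (not_lt.mp ?_)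
        intro hdy
        exact hy (le_trans (hclose y hdy) (Nat.cast_le.mpr (by omega)))
      have hy_ne : (Gm.neighborSet y).Nonempty := by
        apply Set.nonempty_of_ncard_ne_zero
        omega
      obtain ⟨x, hx⟩ := hy_ne
      have hyx : Gm.Adj y x := hx
      have hx2 : ¬ (Gm.edist b₀ x ≤ ((3*g+1:ℕ):ℕ∞)) := by
        intro hxle
        apply hy
        calc Gm.edist b₀ y ≤ Gm.edist b₀ x + Gm.edist x y := Gm.edist_triangle
        _ ≤ ((3*g+1:ℕ):ℕ∞) + 1 := by
            apply add_le_add hxle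
            rw [SimpleGraph.edist_eq_one_iff_adj.mpr hyx.symm]
        _ = ((3*g+2:ℕ):ℕ∞) := by push_cast; ring
      have hfar : ∀ z, ¬ (Gm.edist b₀ z ≤ ((3*g+1:ℕ):ℕ∞)) →
          ∀ d, Gm.edist b₀ d ≤ ((2*g:ℕ):ℕ∞) → (g:ℕ∞) ≤ Gm.edist d z := by
        intro z hz d hd
        by_contra hlt
        apply hz
        calc Gm.edist b₀ z ≤ Gm.edist b₀ d + Gm.edist d z := Gm.edist_triangle
        _ ≤ ((2*g:ℕ):ℕ∞) + (g:ℕ∞) := add_le_add hd (le_of_lt (not_le.mp hlt))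
        _ = ((3*g:ℕ):ℕ∞) := by push_cast; ring
        _ ≤ ((3*g+1:ℕ):ℕ∞) := Nat.cast_le.mpr (by omega)
      have hb₀b₀ : Gm.edist b₀ b₀ ≤ ((2*g:ℕ):ℕ∞) := by
        rw [SimpleGraph.edist_self]; exact zero_le
      have ha₀cl : Gm.edist b₀ a₀ ≤ ((2*g:ℕ):ℕ∞) :=
        le_trans hab_close (Nat.cast_le.mpr (by omega))
      have hne_of_far : ∀ {u w : Fin n}, (g:ℕ∞) ≤ Gm.edist u w → u ≠ w := by
        intro u w hf rfl2
        rw [rfl2, SimpleGraph.edist_self] at hf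
        have : g = 0 := by exact_mod_cast le_antisymm (by exact_mod_cast hf) zero_le
        omega
      suffices htail : ∀ p q : Fin n, sd p → ¬ sd q → Gm.Adj p q →
          (¬ (Gm.edist b₀ p ≤ ((3*g+1:ℕ):ℕ∞))) →
          (¬ (Gm.edist b₀ q ≤ ((3*g+1:ℕ):ℕ∞))) → False by
        rcases (hKbAdj.mp (hGmK hyx)).2 with ⟨hsy', hsx'⟩ | ⟨hsx', hsy'⟩
        · exact htail y x hsy' hsx' hyx hy2 hx2
        · exact htail x y hsx' hsy' hyx.symm hx2 hy2
      intro p q hsp hsq hpq hpfar hqfar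
      have hfpa : (g:ℕ∞) ≤ Gm.edist a₀ p := hfar p hpfar a₀ ha₀cl
      have hfpb : (g:ℕ∞) ≤ Gm.edist b₀ p := hfar p hpfar b₀ hb₀b₀
      have hfqa : (g:ℕ∞) ≤ Gm.edist a₀ q := hfar q hqfar a₀ ha₀cl
      have hfqb : (g:ℕ∞) ≤ Gm.edist b₀ q := hfar q hqfar b₀ hb₀b₀
      have hKpb : Kb.Adj p b₀ := hKbmk hsp hsb₀
      obtain ⟨e1, e2, e3, e4, e5, e6⟩ := exchange_in_family hg hGmK hGmdeg hGmgirth hpq hKpb hdb₀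
        (by rw [SimpleGraph.edist_comm]; exact hfpb) (by rw [SimpleGraph.edist_comm]; exact hfqb)
      set Gd := Gm.deleteEdges {s(p,q)} with hGdd
      set G1 := Gd ⊔ fromEdgeSet {s(p,b₀)} with hG1d
      have hGdle : Gd ≤ Gm := SimpleGraph.deleteEdges_le _
      have ha₀p : a₀ ≠ p := hne_of_far hfpa
      have ha₀q : a₀ ≠ q := hne_of_far hfqa
      have ha₀b : a₀ ≠ b₀ := by
        intro h; rw [h] at hsa₀; exact hsb₀ hsa₀
      have hda₀1 : (G1.neighborSet a₀).ncard < Δ := by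
        rw [e6 a₀ ha₀p ha₀q ha₀b]; exact hda₀
      have hdq1 : (G1.neighborSet q).ncard < Δ := by
        have h2 := hGmdeg q
        omega
      have hdist1 : (g:ℕ∞) ≤ G1.edist a₀ q + 1 := by
        rcases edist_sup_edge_lower Gd p b₀ a₀ q with h | h | h
        · calc (g:ℕ∞) ≤ Gm.edist a₀ q := hfqa
          _ ≤ Gd.edist a₀ q := SimpleGraph.edist_anti hGdle
          _ ≤ G1.edist a₀ q := h
          _ ≤ G1.edist a₀ q + 1 := le_self_add
        · calc (g:ℕ∞) ≤ Gm.edist b₀ q := hfqb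
          _ ≤ Gd.edist b₀ q := SimpleGraph.edist_anti hGdle
          _ ≤ Gd.edist a₀ p + 1 + Gd.edist b₀ q := le_add_self
          _ ≤ G1.edist a₀ q := h
          _ ≤ G1.edist a₀ q + 1 := le_self_add
        · have hpq_del : (g:ℕ∞) ≤ Gd.edist p q + 1 := edist_deleteEdge_ge hpq hGmgirth
          calc (g:ℕ∞) ≤ Gd.edist p q + 1 := hpq_del
          _ ≤ (Gd.edist a₀ b₀ + 1 + Gd.edist p q) + 1 :=
              add_le_add le_add_self le_rfl
          _ ≤ G1.edist a₀ q + 1 := add_le_add h le_rfl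
      have hKaq : Kb.Adj a₀ q := hKbmk hsa₀ hsq
      obtain ⟨f1, f2, f3, f4⟩ := add_edge_in_family hg e1 e2 e3 hKaq hda₀1 hdq1 hdist1
      have hF2 : (G1 ⊔ fromEdgeSet {s(a₀,q)}) ∈ Fam := ⟨f1, f2, f3⟩
      have hle := hmax hF2 (by beta_reduce; rw [f4, e4]; omega)
      beta_reduce at hle; rw [f4, e4] at hle
      omega
  exact ⟨n, Gm, hnpos, hreg, ⟨{v | sd v}, fun u v huv => hside huv⟩, hGmgirth⟩
lemma class_bound {W : Type*} [Fintype W] [DecidableEq W] (G : SimpleGraph W)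
    [DecidableRel G.Adj] [Fintype G.edgeSet] {Δ : ℕ} (hΔ : 1 ≤ Δ)
    (hdeg : ∀ v, G.degree v = Δ)
    (htf : ∀ a b c : W, G.Adj a b → G.Adj b c → G.Adj c a → False)
    (S : Finset (Sym2 W)) (hS : S ⊆ G.edgeFinset)
    (hgood : ∀ e₁ ∈ S, ∀ e₂ ∈ S, e₁ ≠ e₂ → ∀ x ∈ e₁, ∀ y ∈ e₂, G.Adj x y →
      ∃ z, z ∈ e₁ ∧ z ∈ e₂) :
    2 * S.card ≤ Fintype.card W := by
  classical
  set dS : W → ℕ := fun v => (S.filter (fun e => v ∈ e)).card with hdS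
  have hadj_of_mem : ∀ {x y : W}, s(x,y) ∈ S → G.Adj x y := by
    intro x y hmem
    exact (SimpleGraph.mem_edgeFinset.mp (hS hmem))
  have hne_of_mem : ∀ {x y : W}, s(x,y) ∈ S → x ≠ y := fun h => (hadj_of_mem h).ne
  -- dS is at most Δ
  have hdS_le : ∀ v, dS v ≤ Δ := by
    intro v
    rw [← hdeg v, ← SimpleGraph.card_incidenceFinset_eq_degree,
      SimpleGraph.incidenceFinset_eq_filter]
    exact Finset.card_le_card (Finset.filter_subset_filter _ hS)
  -- membership of endpoints
  have hmem_dS : ∀ {x y : W}, s(x,y) ∈ S → 1 ≤ dS x := by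
    intro x y hmem
    have : s(x,y) ∈ S.filter (fun e => x ∈ e) :=
      Finset.mem_filter.mpr ⟨hmem, Sym2.mem_mk_left x y⟩
    exact Finset.card_pos.mpr ⟨_, this⟩
  -- (a) every edge of S has an endpoint with dS = 1
  have hfa : ∀ e ∈ S, ∃ v, v ∈ e ∧ dS v = 1 := by
    intro e he
    induction e with
    | h x y =>
      by_contra hno
      push_neg at hno
      have hx1 : 1 ≤ dS x := hmem_dS he
      have hy1 : 1 ≤ dS y := hmem_dS (Sym2.eq_swap ▸ he)
      have hx2 : 2 ≤ dS x := by
        have := hno x (Sym2.mem_mk_left x y)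
        omega
      have hy2 : 2 ≤ dS y := by
        have := hno y (Sym2.mem_mk_right x y)
        omega
      have hxy : G.Adj x y := hadj_of_mem he
      obtain ⟨e₁, he₁f, he₁ne⟩ := Finset.exists_mem_ne (by omega : 1 < dS x) s(x,y)
      obtain ⟨e₂, he₂f, he₂ne⟩ := Finset.exists_mem_ne (by omega : 1 < dS y) s(x,y)
      rw [Finset.mem_filter] at he₁f he₂f
      obtain ⟨he₁S, hxe₁⟩ := he₁f
      obtain ⟨he₂S, hye₂⟩ := he₂f
      obtain ⟨a, rfl⟩ := Sym2.mem_iff_exists.mp hxe₁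
      obtain ⟨b, rfl⟩ := Sym2.mem_iff_exists.mp hye₂
      have hax : a ≠ x := fun h => (hne_of_mem he₁S) h.symm
      have hby : b ≠ y := fun h => (hne_of_mem he₂S) h.symm
      have hay : a ≠ y := by
        rintro rfl
        exact he₁ne rfl
      have hbx : b ≠ x := by
        rintro rfl
        exact he₂ne (Sym2.eq_swap)
      have h12 : s(x,a) ≠ s(y,b) := by
        intro hcon
        rcases Sym2.eq_iff.mp hcon with ⟨h1, h2⟩ | ⟨h1, h2⟩
        · exact hxy.ne h1
        · exact hay h2
      obtain ⟨z, hz1, hz2⟩ := hgood _ he₁S _ he₂S h12 x (Sym2.mem_mk_left x a)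
        y (Sym2.mem_mk_left y b) hxy
      rcases Sym2.mem_iff.mp hz1 with rfl | rfl
      · rcases Sym2.mem_iff.mp hz2 with h | h
        · exact hxy.ne h
        · exact hbx h.symm
      · rcases Sym2.mem_iff.mp hz2 with h | h
        · exact hay h
        · -- z = a = b : triangle x–y–a
          subst h
          exact htf x y z hxy (hadj_of_mem he₂S) (hadj_of_mem he₁S).symm
  -- (b) no edge outside S joins two covered vertices
  have hfb : ∀ e ∈ G.edgeFinset, e ∉ S → ∀ x y : W, s(x,y) = e → 1 ≤ dS x → 1 ≤ dS y → False := by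
    intro e heE heS x y hexy hx hy
    subst hexy
    have hxy : G.Adj x y := SimpleGraph.mem_edgeFinset.mp heE
    obtain ⟨e₁, he₁f⟩ := Finset.card_pos.mp (by omega : 0 < dS x)
    obtain ⟨e₂, he₂f⟩ := Finset.card_pos.mp (by omega : 0 < dS y)
    rw [Finset.mem_filter] at he₁f he₂f
    obtain ⟨he₁S, hxe₁⟩ := he₁f
    obtain ⟨he₂S, hye₂⟩ := he₂f
    obtain ⟨a, rfl⟩ := Sym2.mem_iff_exists.mp hxe₁
    obtain ⟨b, rfl⟩ := Sym2.mem_iff_exists.mp hye₂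
    have hay : a ≠ y := by
      rintro rfl
      exact heS he₁S
    have hbx : b ≠ x := by
      rintro rfl
      exact heS (Sym2.eq_swap ▸ he₂S)
    have h12 : s(x,a) ≠ s(y,b) := by
      intro hcon
      rcases Sym2.eq_iff.mp hcon with ⟨h1, h2⟩ | ⟨h1, h2⟩
      · exact hxy.ne h1
      · exact hay h2
    obtain ⟨z, hz1, hz2⟩ := hgood _ he₁S _ he₂S h12 x (Sym2.mem_mk_left x a)
      y (Sym2.mem_mk_left y b) hxy
    rcases Sym2.mem_iff.mp hz1 with rfl | rfl
    · rcases Sym2.mem_iff.mp hz2 with h | h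
      · exact hxy.ne h
      · exact hbx h.symm
    · rcases Sym2.mem_iff.mp hz2 with h | h
      · exact hay h
      · subst h
        exact htf x y z hxy (hadj_of_mem he₂S) (hadj_of_mem he₁S).symm
  -- counting
  set VS : Finset W := Finset.univ.filter (fun v => 1 ≤ dS v) with hVS
  set L : Finset W := Finset.univ.filter (fun v => dS v = 1) with hL
  set C2 : Finset W := Finset.univ.filter (fun v => 2 ≤ dS v) with hC2
  set VSc : Finset W := Finset.univ.filter (fun v => ¬ 1 ≤ dS v) with hVSc
  set K := S.card with hK
  -- (c1) total incidence
  have hc1 : ∑ v ∈ Finset.univ, dS v = 2 * K := by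
    rw [hdS]
    rw [sum_incidence Finset.univ S]
    have : ∀ e ∈ S, (Finset.univ.filter (fun v => v ∈ e)).card = 2 := by
      intro e he
      induction e with
      | h x y =>
        rw [endpoints_filter_card Finset.univ (hne_of_mem he)]
        simp
    rw [Finset.sum_congr rfl this, Finset.sum_const, smul_eq_mul, mul_comm]
  -- split the sum over L and C2
  have hc2 : ∑ v ∈ Finset.univ, dS v = ∑ v ∈ L, dS v + ∑ v ∈ C2, dS v := by
    have hsub : C2 ⊆ Finset.univ.filter (fun v => ¬ dS v = 1) := by
      intro v hv
      rw [hC2, Finset.mem_filter] at hv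
      rw [Finset.mem_filter]
      exact ⟨hv.1, by omega⟩
    have hzero : ∀ v ∈ Finset.univ.filter (fun v => ¬ dS v = 1), v ∉ C2 → dS v = 0 := by
      intro v hv hvc
      rw [Finset.mem_filter] at hv
      have h2 : ¬ 2 ≤ dS v := by
        intro h2
        exact hvc (by rw [hC2, Finset.mem_filter]; exact ⟨Finset.mem_univ v, h2⟩)
      have := hv.2
      omega
    calc ∑ v ∈ Finset.univ, dS v
        = ∑ v ∈ Finset.univ.filter (fun v => dS v = 1), dS v +
          ∑ v ∈ Finset.univ.filter (fun v => ¬ dS v = 1), dS v :=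
          (Finset.sum_filter_add_sum_filter_not Finset.univ (fun v => dS v = 1) dS).symm
    _ = ∑ v ∈ L, dS v + ∑ v ∈ C2, dS v := by
        rw [hL, Finset.sum_subset hsub hzero]
  have hc3 : ∑ v ∈ L, dS v = L.card := by
    rw [Finset.sum_congr rfl (fun v hv => (Finset.mem_filter.mp hv).2), Finset.sum_const,
      smul_eq_mul, mul_one]
  have hc4 : K ≤ L.card := by
    rw [← hc3, hdS, sum_incidence L S]
    calc K = ∑ _e ∈ S, 1 := by rw [Finset.sum_const, smul_eq_mul, mul_one]
    _ ≤ ∑ e ∈ S, (L.filter (fun v => v ∈ e)).card := by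
        apply Finset.sum_le_sum
        intro e he
        obtain ⟨v, hv1, hv2⟩ := hfa e he
        refine Finset.card_pos.mpr ⟨v, ?_⟩
        rw [Finset.mem_filter]
        exact ⟨Finset.mem_filter.mpr ⟨Finset.mem_univ _, hv2⟩, hv1⟩
  have hc5 : ∑ v ∈ C2, dS v ≤ Δ * C2.card := by
    calc ∑ v ∈ C2, dS v ≤ ∑ _v ∈ C2, Δ := Finset.sum_le_sum (fun v _ => hdS_le v)
    _ = Δ * C2.card := by rw [Finset.sum_const, smul_eq_mul, mul_comm]
  have hc6 : VS.card = L.card + C2.card := by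
    have hdisj : Disjoint L C2 := by
      rw [Finset.disjoint_filter]
      intro v _ h1
      omega
    have hunion : VS = L ∪ C2 := by
      ext v
      simp only [hVS, hL, hC2, Finset.mem_filter, Finset.mem_union, Finset.mem_univ, true_and]
      omega
    rw [hunion, Finset.card_union_of_disjoint hdisj]
  -- (c7) boundary bound
  have hdE : ∀ v, (G.edgeFinset.filter (fun e => v ∈ e)).card = Δ := by
    intro v
    rw [← SimpleGraph.incidenceFinset_eq_filter, SimpleGraph.card_incidenceFinset_eq_degree, hdeg]
  have hc7 : Δ * VS.card ≤ 2 * K + Δ * VSc.card := by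
    have hsumVS : Δ * VS.card = ∑ e ∈ G.edgeFinset, (VS.filter (fun v => v ∈ e)).card := by
      rw [← sum_incidence VS G.edgeFinset, Finset.sum_congr rfl (fun v _ => hdE v),
        Finset.sum_const, smul_eq_mul, mul_comm]
    have hsumVSc : ∑ e ∈ G.edgeFinset, (VSc.filter (fun v => v ∈ e)).card = Δ * VSc.card := by
      rw [← sum_incidence VSc G.edgeFinset, Finset.sum_congr rfl (fun v _ => hdE v),
        Finset.sum_const, smul_eq_mul, mul_comm]
    have hSsum : ∑ e ∈ S, (VS.filter (fun v => v ∈ e)).card = 2 * K := by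
      have : ∀ e ∈ S, (VS.filter (fun v => v ∈ e)).card = 2 := by
        intro e he
        induction e with
        | h x y =>
          rw [endpoints_filter_card VS (hne_of_mem he)]
          have hx : x ∈ VS := Finset.mem_filter.mpr ⟨Finset.mem_univ _, hmem_dS he⟩
          have hy : y ∈ VS := Finset.mem_filter.mpr
            ⟨Finset.mem_univ _, hmem_dS (Sym2.eq_swap ▸ he)⟩
          rw [if_pos hx, if_pos hy]
      rw [Finset.sum_congr rfl this, Finset.sum_const, smul_eq_mul, mul_comm]
    have hrest : ∑ e ∈ G.edgeFinset \ S, (VS.filter (fun v => v ∈ e)).card ≤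
        ∑ e ∈ G.edgeFinset \ S, (VSc.filter (fun v => v ∈ e)).card := by
      apply Finset.sum_le_sum
      intro e he
      rw [Finset.mem_sdiff] at he
      induction e with
      | h x y =>
        have hne : x ≠ y := (SimpleGraph.mem_edgeFinset.mp he.1).ne
        rw [endpoints_filter_card VS hne, endpoints_filter_card VSc hne]
        have hnotboth : ¬ (1 ≤ dS x ∧ 1 ≤ dS y) := by
          rintro ⟨h1, h2⟩
          exact hfb _ he.1 he.2 x y rfl h1 h2
        have hmVS : ∀ w, w ∈ VS ↔ 1 ≤ dS w := by
          intro w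
          rw [hVS, Finset.mem_filter]
          simp
        have hmVSc : ∀ w, w ∈ VSc ↔ ¬ 1 ≤ dS w := by
          intro w
          rw [hVSc, Finset.mem_filter]
          simp
        by_cases h1 : x ∈ VS <;> by_cases h2 : y ∈ VS
        · exact absurd ⟨(hmVS x).mp h1, (hmVS y).mp h2⟩ hnotboth
        · have : y ∈ VSc := (hmVSc y).mpr (fun h => h2 ((hmVS y).mpr h))
          simp [h1, h2, this]
        · have : x ∈ VSc := (hmVSc x).mpr (fun h => h1 ((hmVS x).mpr h))
          simp [h1, h2, this]
        · have hx : x ∈ VSc := (hmVSc x).mpr (fun h => h1 ((hmVS x).mpr h))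
          have hy : y ∈ VSc := (hmVSc y).mpr (fun h => h2 ((hmVS y).mpr h))
          simp [h1, h2, hx, hy]
    calc Δ * VS.card = ∑ e ∈ G.edgeFinset \ S, (VS.filter (fun v => v ∈ e)).card +
        ∑ e ∈ S, (VS.filter (fun v => v ∈ e)).card := by
          rw [hsumVS, Finset.sum_sdiff hS]
    _ ≤ ∑ e ∈ G.edgeFinset \ S, (VSc.filter (fun v => v ∈ e)).card + 2 * K := by
        rw [hSsum]; exact add_le_add hrest le_rfl
    _ ≤ ∑ e ∈ G.edgeFinset, (VSc.filter (fun v => v ∈ e)).card + 2 * K := by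
        refine add_le_add ?_ le_rfl
        exact Finset.sum_le_sum_of_subset (Finset.sdiff_subset)
    _ = Δ * VSc.card + 2 * K := by rw [hsumVSc]
    _ = 2 * K + Δ * VSc.card := by ring
  -- final arithmetic
  have hcard : VS.card + VSc.card = Fintype.card W := by
    have := Finset.card_filter_add_card_filter_not
      (s := (Finset.univ : Finset W)) (p := fun v => 1 ≤ dS v)
    rwa [Finset.card_univ] at this
  have hmul3 : Δ * VS.card + Δ * VSc.card = Δ * Fintype.card W := by
    rw [← Nat.mul_add, hcard]
  have hmul1 : Δ * VS.card = Δ * L.card + Δ * C2.card := by rw [hc6, Nat.mul_add]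
  have hmul4 : (Δ-1) * K ≤ (Δ-1) * L.card := Nat.mul_le_mul_left _ hc4
  have heq3 : Δ * L.card = (Δ-1) * L.card + L.card := by
    conv_lhs => rw [← Nat.sub_add_cancel hΔ]
    rw [Nat.add_mul, one_mul]
  have heq5 : Δ * K = (Δ-1) * K + K := by
    conv_lhs => rw [← Nat.sub_add_cancel hΔ]
    rw [Nat.add_mul, one_mul]
  have heq7 : Δ * (2 * K) = 2 * (Δ * K) := by ring
  have hfin : Δ * (2 * K) ≤ Δ * Fintype.card W := by omega
  exact Nat.le_of_mul_le_mul_left hfin (by omega)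

end Aux

lemma le_injChromIndex {n Δ : ℕ} (hn : 0 < n) (hΔ : 1 ≤ Δ) (G : SimpleGraph (Fin n))
    (hreg : ∀ v, (G.neighborSet v).ncard = Δ)
    (htf : ∀ a b c : Fin n, G.Adj a b → G.Adj b c → G.Adj c a → False) :
    Δ ≤ injChromIndex G := by
  classical
  letI : DecidableRel G.Adj := Classical.decRel _
  have hmain : ∀ (k : ℕ) (f : Sym2 (Fin n) → Fin k), IsInjEdgeColoring G f → Δ ≤ k := by
    intro k f hf
    by_contra hk
    push_neg at hk
    have hdeg : ∀ v, G.degree v = Δ := fun v => by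
      rw [← ncard_neighborSet_eq_degree]; exact hreg v
    have hbound : ∀ c : Fin k, 2 * (G.edgeFinset.filter (fun e => f e = c)).card ≤ n := by
      intro c
      have hcb := class_bound G hΔ hdeg htf (G.edgeFinset.filter (fun e => f e = c))
        (Finset.filter_subset _ _) ?_
      · rwa [Fintype.card_fin] at hcb
      · intro e₁ h1 e₂ h2 hne x hx y hy hxy
        by_contra hno
        push_neg at hno
        rw [Finset.mem_filter] at h1 h2
        refine hf e₁ (SimpleGraph.mem_edgeFinset.mp h1.1)
          e₂ (SimpleGraph.mem_edgeFinset.mp h2.1)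
          ⟨hne, Or.inl ⟨hno, ⟨x, hx, y, hy, hxy⟩⟩⟩ ?_
        rw [h1.2, h2.2]
    have hsumdeg : ∑ v : Fin n, G.degree v = 2 * G.edgeFinset.card :=
      SimpleGraph.sum_degrees_eq_twice_card_edges G
    have h2m : n * Δ = 2 * G.edgeFinset.card := by
      rw [← hsumdeg, Finset.sum_congr rfl (fun v _ => hdeg v), Finset.sum_const,
        Finset.card_univ, Fintype.card_fin, smul_eq_mul]
    have hfib : G.edgeFinset.card =
        ∑ c : Fin k, (G.edgeFinset.filter (fun e => f e = c)).card :=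
      Finset.card_eq_sum_card_fiberwise (fun e _ => Finset.mem_univ (f e))
    have hkb : 2 * G.edgeFinset.card ≤ k * n := by
      calc 2 * G.edgeFinset.card
          = ∑ c : Fin k, 2 * (G.edgeFinset.filter (fun e => f e = c)).card := by
            rw [hfib, Finset.mul_sum]
      _ ≤ ∑ _c : Fin k, n := Finset.sum_le_sum (fun c _ => hbound c)
      _ = k * n := by rw [Finset.sum_const, Finset.card_univ, Fintype.card_fin, smul_eq_mul]
    have hkn : k * n ≤ (Δ-1) * n := Nat.mul_le_mul_right n (by omega)
    have hcomm : (Δ-1) * n = n * (Δ-1) := Nat.mul_comm _ _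
    have h3 : n * Δ ≤ n * (Δ-1) := by omega
    have h4 : Δ ≤ Δ - 1 := Nat.le_of_mul_le_mul_left h3 hn
    omega
  have hne : {k : ℕ | ∃ f : Sym2 (Fin n) → Fin k, IsInjEdgeColoring G f}.Nonempty := by
    refine ⟨Fintype.card (Sym2 (Fin n)), Fintype.equivFin (Sym2 (Fin n)), ?_⟩
    intro e₁ _ e₂ _ hc hfe
    exact hc.1 ((Fintype.equivFin (Sym2 (Fin n))).injective hfe)
  have hmem := Nat.sInf_mem hne
  obtain ⟨f, hf⟩ := hmem
  exact hmain _ f hf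

/-- Proposition 6: for every `Δ ≥ 3` and `g ≥ 3` there is a `Δ`-regular bipartite graph
with girth at least `g` whose injective chromatic index is at least `Δ`. -/
theorem exists_regular_bipartite_injChromIndex_ge (Δ g : ℕ) (hΔ : 3 ≤ Δ) (hg : 3 ≤ g) :
    ∃ (n : ℕ) (G : SimpleGraph (Fin n)),
      (∀ v, (G.neighborSet v).ncard = Δ) ∧
      IsBipartiteGraph G ∧
      (g : ℕ∞) ≤ G.egirth ∧
      Δ ≤ injChromIndex G := by
  obtain ⟨n, G, hn, hreg, ⟨A, hA⟩, hgirth⟩ := exists_good_graph Δ g hΔ hg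
  refine ⟨n, G, hreg, ⟨A, hA⟩, hgirth, ?_⟩
  apply le_injChromIndex hn (by omega) G hreg
  intro a b c hab hbc hca
  have h1 := hA hab
  have h2 := hA hbc
  have h3 := hA hca
  tauto
end

section
/- Let Δ ≥ 1 and let G be a Δ-regular bipartite finite simple graph with at least one vertex. Then the injective chromatic index of G satisfies χ'_inj(G) ≥ Δ. -/
open SimpleGraph

/-- Any independent set in a `Δ`-regular graph (`Δ ≥ 1`) covers at most half the vertices. -/
lemma aux_indep_bound {V : Type*} [Fintype V] (G : SimpleGraph V) [DecidableRel G.Adj]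
    {Δ : ℕ} (hΔ : 1 ≤ Δ) (hreg : G.IsRegularOfDegree Δ)
    (I : Finset V) (hI : ∀ u ∈ I, ∀ v ∈ I, ¬ G.Adj u v) :
    2 * I.card ≤ Fintype.card V := by
  classical
  have h1 : ((I ×ˢ Finset.univ).filter fun p : V × V => G.Adj p.1 p.2).card
      = Δ * I.card := by
    rw [Finset.card_filter, Finset.sum_product]
    have : ∀ x ∈ I, (∑ y : V, if G.Adj x y then 1 else 0) = Δ := by
      intro x _
      rw [← Finset.card_filter]
      simpa [SimpleGraph.degree, SimpleGraph.neighborFinset_eq_filter] using hreg x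
    rw [Finset.sum_congr rfl this, Finset.sum_const, smul_eq_mul, mul_comm]
  have h2 : (((Finset.univ \ I) ×ˢ Finset.univ).filter fun p : V × V => G.Adj p.1 p.2).card
      = Δ * (Finset.univ \ I).card := by
    rw [Finset.card_filter, Finset.sum_product]
    have : ∀ x ∈ Finset.univ \ I, (∑ y : V, if G.Adj x y then 1 else 0) = Δ := by
      intro x _
      rw [← Finset.card_filter]
      simpa [SimpleGraph.degree, SimpleGraph.neighborFinset_eq_filter] using hreg x
    rw [Finset.sum_congr rfl this, Finset.sum_const, smul_eq_mul, mul_comm]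
  have hinj : ((I ×ˢ Finset.univ).filter fun p : V × V => G.Adj p.1 p.2).card
      ≤ (((Finset.univ \ I) ×ˢ Finset.univ).filter fun p : V × V => G.Adj p.1 p.2).card := by
    apply Finset.card_le_card_of_injOn (fun p => (p.2, p.1))
    · intro p hp
      simp only [Finset.mem_coe, Finset.mem_filter, Finset.mem_product, Finset.mem_univ, true_and,
        Finset.mem_sdiff, and_true] at hp ⊢
      refine ⟨fun h2 => hI _ hp.1 _ h2 hp.2, hp.2.symm⟩
    · intro p _ q _ h
      simpa [Prod.ext_iff, and_comm] using h
  rw [h1, h2] at hinj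
  have := Nat.le_of_mul_le_mul_left hinj hΔ
  have hc : (Finset.univ \ I).card = Fintype.card V - I.card := by
    rw [Finset.card_sdiff_of_subset (Finset.subset_univ I), Finset.card_univ]
  rw [hc] at this
  have hle : I.card ≤ Fintype.card V := by
    simpa using Finset.card_le_card (Finset.subset_univ I)
  omega

/-- In a triangle-free graph, every edge in a pairwise non-conflicting family of edges has
a "private" endpoint, belonging to no other edge of the family. -/
lemma aux_exists_private {V : Type*} (G : SimpleGraph V)
    (htf : ∀ a b c : V, G.Adj a b → G.Adj b c → G.Adj a c → False)
    (S : Finset (Sym2 V)) (hS : ∀ e ∈ S, e ∈ G.edgeSet)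
    (hnc : ∀ e₁ ∈ S, ∀ e₂ ∈ S, ¬ EdgeConflict G e₁ e₂)
    (e : Sym2 V) (he : e ∈ S) :
    ∃ v, v ∈ e ∧ ∀ e' ∈ S, e' ≠ e → v ∉ e' := by
  classical
  by_contra hcon
  push_neg at hcon
  obtain ⟨⟨x, y⟩, rfl⟩ := e.exists_rep
  have hxy : G.Adj x y := (G.mem_edgeSet).1 (hS _ he)
  obtain ⟨e₁, he₁S, he₁ne, hxe₁⟩ := hcon x (by simp)
  obtain ⟨e₂, he₂S, he₂ne, hye₂⟩ := hcon y (by simp)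
  have hz := Sym2.other_spec hxe₁
  set z := Sym2.Mem.other hxe₁ with hzdef
  have hxz : G.Adj x z := by rw [← G.mem_edgeSet, hz]; exact hS _ he₁S
  have hw := Sym2.other_spec hye₂
  set w := Sym2.Mem.other hye₂ with hwdef
  have hyw : G.Adj y w := by rw [← G.mem_edgeSet, hw]; exact hS _ he₂S
  have hzy : z ≠ y := by
    rintro rfl; exact he₁ne hz.symm
  have hwx : w ≠ x := by
    rintro rfl
    apply he₂ne
    rw [← hw, Sym2.eq_swap]
  have hne12 : e₁ ≠ e₂ := by
    rintro rfl
    have : y ∈ e₁ := hye₂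
    rw [← hz, Sym2.mem_iff] at this
    rcases this with h | h
    · exact G.ne_of_adj hxy h.symm
    · exact hzy h.symm
  by_cases hzw : z = w
  · exact htf x y z hxy (by rw [hzw]; exact hyw) hxz
  · apply hnc e₁ he₁S e₂ he₂S
    refine ⟨hne12, Or.inl ⟨?_, x, hxe₁, y, hye₂, hxy⟩⟩
    intro u hu
    rw [← hz, Sym2.mem_iff] at hu
    rw [← hw, Sym2.mem_iff]
    rcases hu with rfl | rfl
    · push_neg
      exact ⟨G.ne_of_adj hxy, fun h => hwx h.symm⟩
    · push_neg
      exact ⟨hzy, hzw⟩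

/-- A pairwise non-conflicting family of edges in a `Δ`-regular triangle-free graph has
at most `|V|/2` members. -/
lemma aux_class_bound {V : Type*} [Fintype V] (G : SimpleGraph V) [DecidableRel G.Adj]
    {Δ : ℕ} (hΔ : 1 ≤ Δ) (hreg : G.IsRegularOfDegree Δ)
    (htf : ∀ a b c : V, G.Adj a b → G.Adj b c → G.Adj a c → False)
    (S : Finset (Sym2 V)) (hS : ∀ e ∈ S, e ∈ G.edgeSet)
    (hnc : ∀ e₁ ∈ S, ∀ e₂ ∈ S, ¬ EdgeConflict G e₁ e₂) :
    2 * S.card ≤ Fintype.card V := by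
  classical
  choose φ h1 h2 using fun e : {e // e ∈ S} => aux_exists_private G htf S hS hnc e.1 e.2
  have hinj : Function.Injective φ := by
    intro e₁ e₂ h
    by_contra hne
    have hne' : e₁.1 ≠ e₂.1 := fun hh => hne (Subtype.ext hh)
    exact h2 e₂ e₁.1 e₁.2 hne' (h ▸ h1 e₁)
  set I : Finset V := Finset.univ.image φ with hI
  have hIcard : I.card = S.card := by
    rw [hI, Finset.card_image_of_injective _ hinj, Finset.card_univ, Fintype.card_coe]
  have hind : ∀ u ∈ I, ∀ v ∈ I, ¬ G.Adj u v := by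
    intro u hu v hv huv
    rw [hI, Finset.mem_image] at hu hv
    obtain ⟨e₁, -, rfl⟩ := hu
    obtain ⟨e₂, -, rfl⟩ := hv
    have hne : e₁ ≠ e₂ := by rintro rfl; exact G.loopless.irrefl _ huv
    have hne' : e₁.1 ≠ e₂.1 := fun hh => hne (Subtype.ext hh)
    have hu2 : φ e₁ ∉ e₂.1 := h2 e₁ e₂.1 e₂.2 hne'.symm
    have hv1 : φ e₂ ∉ e₁.1 := h2 e₂ e₁.1 e₁.2 hne'
    have hx := Sym2.other_spec (h1 e₁)
    set x := Sym2.Mem.other (h1 e₁) with hxdef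
    have hxAdj : G.Adj (φ e₁) x := by rw [← G.mem_edgeSet, hx]; exact hS _ e₁.2
    have hy := Sym2.other_spec (h1 e₂)
    set y := Sym2.Mem.other (h1 e₂) with hydef
    have hyAdj : G.Adj (φ e₂) y := by rw [← G.mem_edgeSet, hy]; exact hS _ e₂.2
    have hxv : x ≠ φ e₂ := by
      intro h
      exact hv1 (by rw [← hx, h]; simp)
    have hyu : y ≠ φ e₁ := by
      intro h
      exact hu2 (by rw [← hy, h]; simp)
    by_cases hxy : x = y
    · exact htf (φ e₁) (φ e₂) x huv (by rw [hxy]; exact hyAdj) hxAdj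
    · apply hnc e₁.1 e₁.2 e₂.1 e₂.2
      refine ⟨hne', Or.inl ⟨?_, φ e₁, h1 e₁, φ e₂, h1 e₂, huv⟩⟩
      intro u hu
      rw [← hx, Sym2.mem_iff] at hu
      rw [← hy, Sym2.mem_iff]
      rcases hu with rfl | rfl
      · push_neg
        exact ⟨G.ne_of_adj huv, fun h => hyu h.symm⟩
      · push_neg
        exact ⟨hxv, hxy⟩
  rw [← hIcard]
  exact aux_indep_bound G hΔ hreg I hind

/-- Every `Δ`-regular bipartite graph (`Δ ≥ 1`) with at least one vertex has injective
chromatic index at least `Δ`. -/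
theorem regular_bipartite_injChromIndex_ge {V : Type*} [Fintype V] [Nonempty V]
    (G : SimpleGraph V) [DecidableRel G.Adj] (Δ : ℕ) (hΔ : 1 ≤ Δ)
    (hreg : G.IsRegularOfDegree Δ) (hbip : IsBipartiteGraph G) :
    Δ ≤ injChromIndex G := by
  classical
  obtain ⟨A, hA⟩ := hbip
  have htf : ∀ a b c : V, G.Adj a b → G.Adj b c → G.Adj a c → False := by
    intro a b c hab hbc hac
    have h1 := hA hab
    have h2 := hA hbc
    have h3 := hA hac
    tauto
  apply le_csInf
  · refine ⟨Fintype.card (Sym2 V), (Fintype.equivFin (Sym2 V)), ?_⟩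
    intro e₁ _ e₂ _ hc h
    exact hc.1 ((Fintype.equivFin (Sym2 V)).injective h)
  · rintro k ⟨f, hf⟩
    -- counting argument
    have hfib : G.edgeFinset.card
        = ∑ c : Fin k, (G.edgeFinset.filter fun e => f e = c).card :=
      Finset.card_eq_sum_card_fiberwise (fun e _ => Finset.mem_univ (f e))
    have hclass : ∀ c : Fin k,
        2 * (G.edgeFinset.filter fun e => f e = c).card ≤ Fintype.card V := by
      intro c
      apply aux_class_bound G hΔ hreg htf
      · intro e he
        rw [Finset.mem_filter] at he
        exact SimpleGraph.mem_edgeFinset.1 he.1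
      · intro e₁ h₁ e₂ h₂ hcf
        rw [Finset.mem_filter] at h₁ h₂
        exact hf e₁ (SimpleGraph.mem_edgeFinset.1 h₁.1) e₂ (SimpleGraph.mem_edgeFinset.1 h₂.1)
          hcf (h₁.2.trans h₂.2.symm)
    have hsum : 2 * G.edgeFinset.card ≤ k * Fintype.card V := by
      rw [hfib, Finset.mul_sum]
      calc (∑ c : Fin k, 2 * (G.edgeFinset.filter fun e => f e = c).card)
          ≤ ∑ _c : Fin k, Fintype.card V := Finset.sum_le_sum fun c _ => hclass c
        _ = k * Fintype.card V := by simp [mul_comm]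
    have hhs : Δ * Fintype.card V = 2 * G.edgeFinset.card := by
      rw [← G.sum_degrees_eq_twice_card_edges]
      rw [Finset.sum_congr rfl fun v _ => hreg v, Finset.sum_const, Finset.card_univ,
        smul_eq_mul, mul_comm]
    have : Δ * Fintype.card V ≤ k * Fintype.card V := hhs ▸ hsum
    exact Nat.le_of_mul_le_mul_right this Fintype.card_pos
end

section
/- Let H be a subcubic finite simple graph and let v be a vertex of H with degree at most 2. If H − v admits an injective edge-coloring with 7 colors, then H admits an injective edge-coloring with 7 colors. -/
open SimpleGraph

lemma EdgeConflict.symm2 {V : Type*} {G : SimpleGraph V} {e₁ e₂ : Sym2 V}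
    (h : EdgeConflict G e₁ e₂) : EdgeConflict G e₂ e₁ := by
  obtain ⟨hne, h⟩ := h
  refine ⟨hne.symm, ?_⟩
  rcases h with ⟨hdisj, x, hx, y, hy, hxy⟩ | ⟨a, b, c, h1, h2, h3, m1, m2⟩
  · exact Or.inl ⟨fun z hz hz' => hdisj z hz' hz, y, hy, x, hx, hxy.symm⟩
  · exact Or.inr ⟨a, b, c, h1, h2, h3, m2, m1⟩

lemma exists_color_notin (s : Finset (Fin 7)) (hs : s.card ≤ 6) : ∃ c, c ∉ s := by
  by_contra h
  push_neg at h
  have h2 := Finset.card_le_card (fun c _ => h c : (Finset.univ : Finset (Fin 7)) ⊆ s)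
  simp at h2
  omega

lemma conflict_card_le {V : Type*} [Fintype V] [DecidableEq V] (H : SimpleGraph V)
    [DecidableRel H.Adj] (hsub : ∀ u : V, H.degree u ≤ 3) {v u : V}
    (hv : H.degree v ≤ 2) (hadj : H.Adj v u)
    [DecidablePred (EdgeConflict H s(v, u))] :
    (H.edgeFinset.filter (EdgeConflict H s(v, u))).card ≤ 6 := by
  classical
  set A := H.neighborFinset v \ {u} with hA
  set B := H.neighborFinset u \ {v} with hB
  have hAmem : ∀ w, w ∈ A ↔ H.Adj v w ∧ w ≠ u := by
    intro w; simp [hA]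
  have hBmem : ∀ w, w ∈ B ↔ H.Adj u w ∧ w ≠ v := by
    intro w; simp [hB]
  have hAcard : A.card ≤ 1 := by
    have h1 : ({u} : Finset V) ⊆ H.neighborFinset v := by simp [hadj]
    rw [hA, Finset.card_sdiff_of_subset h1, Finset.card_singleton,
      H.card_neighborFinset_eq_degree v]
    omega
  have hBcard : B.card ≤ 2 := by
    have h1 : ({v} : Finset V) ⊆ H.neighborFinset u := by simp [hadj.symm]
    rw [hB, Finset.card_sdiff_of_subset h1, Finset.card_singleton,
      H.card_neighborFinset_eq_degree u]
    have := hsub u; omega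
  set T := (A ∪ B).biUnion (fun w => H.incidenceFinset w \ {s(w,v), s(w,u)}) ∪
      (A ∩ B).biUnion (fun w => ({s(w,v), s(w,u)} : Finset (Sym2 V))) with hT
  have hsubset : H.edgeFinset.filter (EdgeConflict H s(v,u)) ⊆ T := by
    intro e he
    rw [Finset.mem_filter, mem_edgeFinset] at he
    obtain ⟨heE, hne, hconf⟩ := he
    rcases hconf with ⟨hdisj, x, hx, y, hy, hxy⟩ | ⟨a, b, c, hab, hbc, hac, m1, m2⟩
    · have hvne : v ∉ e := hdisj v (by simp)
      have hune : u ∉ e := hdisj u (by simp)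
      apply Finset.mem_union_left
      rw [Finset.mem_biUnion]
      refine ⟨y, ?_, ?_⟩
      · rcases Sym2.mem_iff.mp hx with rfl | rfl
        · exact Finset.mem_union_left _ ((hAmem y).mpr ⟨hxy, fun h => hune (h ▸ hy)⟩)
        · exact Finset.mem_union_right _ ((hBmem y).mpr ⟨hxy, fun h => hvne (h ▸ hy)⟩)
      · rw [Finset.mem_sdiff, mem_incidenceFinset]
        refine ⟨⟨heE, hy⟩, ?_⟩
        simp only [Finset.mem_insert, Finset.mem_singleton]
        rintro (rfl | rfl)
        · exact hvne (Sym2.mem_mk_right y v)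
        · exact hune (Sym2.mem_mk_right y u)
    · -- triangle case
      have key : ∀ w : V, H.Adj v w → H.Adj u w →
          (e = s(w,v) ∨ e = s(v,w) ∨ e = s(w,u) ∨ e = s(u,w)) → e ∈ T := by
        intro w hvw huw hcases
        apply Finset.mem_union_right
        rw [Finset.mem_biUnion]
        refine ⟨w, Finset.mem_inter.mpr ⟨(hAmem w).mpr ⟨hvw, huw.ne'⟩,
          (hBmem w).mpr ⟨huw, hvw.ne'⟩⟩, ?_⟩
        rcases hcases with rfl | rfl | rfl | rfl
        · simp
        · rw [Sym2.eq_swap]; simp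
        · simp
        · rw [Sym2.eq_swap]; simp
      simp only [Set.mem_insert_iff, Set.mem_singleton_iff] at m1 m2
      have hne' : e ≠ s(v,u) := fun h => hne h.symm
      rcases m1 with h | h | h <;> rw [Sym2.eq_iff] at h <;>
          rcases h with ⟨rfl, rfl⟩ | ⟨rfl, rfl⟩ <;>
        (rcases m2 with rfl | rfl | rfl <;>
          first
            | exact absurd rfl hne'
            | exact absurd Sym2.eq_swap hne'
            | exact key c hac hbc (by tauto)
            | exact key c hbc hac (by tauto)
            | exact key a hab.symm hac.symm (by tauto)
            | exact key a hac.symm hab.symm (by tauto)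
            | exact key b hab hbc.symm (by tauto)
            | exact key b hbc.symm hab (by tauto))
  refine le_trans (Finset.card_le_card hsubset) ?_
  -- bound the card of T
  have hterm : ∀ w ∈ A ∪ B, (H.incidenceFinset w \ {s(w,v), s(w,u)}).card ≤ 2 := by
    intro w hw
    have hsub2 : ∀ x, (H.incidenceFinset w \ {s(w,v), s(w,u)}).card ≤
        (if x ∈ H.incidenceFinset w ∧ (x = s(w,v) ∨ x = s(w,u)) then H.degree w - 1
          else H.degree w) := by
      intro x
      split_ifs with hx
      · obtain ⟨hx1, hx2⟩ := hx
        have : H.incidenceFinset w \ {s(w,v), s(w,u)} ⊆ (H.incidenceFinset w).erase x := by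
          intro y hy
          rw [Finset.mem_sdiff] at hy
          refine Finset.mem_erase.mpr ⟨?_, hy.1⟩
          rintro rfl
          rcases hx2 with rfl | rfl <;> simp at hy
        calc _ ≤ ((H.incidenceFinset w).erase x).card := Finset.card_le_card this
          _ = H.degree w - 1 := by
            rw [Finset.card_erase_of_mem hx1, H.card_incidenceFinset_eq_degree]
      · calc _ ≤ (H.incidenceFinset w).card :=
            Finset.card_le_card (Finset.sdiff_subset)
          _ = H.degree w := H.card_incidenceFinset_eq_degree w
    rcases Finset.mem_union.mp hw with hw | hw
    · have h1 := (hAmem w).mp hw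
      have := hsub2 s(w,v)
      rw [if_pos ⟨by rw [mem_incidenceFinset]; exact ⟨h1.1.symm, Sym2.mem_mk_left w v⟩,
        Or.inl rfl⟩] at this
      have := hsub w; omega
    · have h1 := (hBmem w).mp hw
      have := hsub2 s(w,u)
      rw [if_pos ⟨by rw [mem_incidenceFinset]; exact ⟨h1.1.symm, Sym2.mem_mk_left w u⟩,
        Or.inr rfl⟩] at this
      have := hsub w; omega
  by_cases hAB : A ∩ B = ∅
  · have : T ⊆ (A ∪ B).biUnion (fun w => H.incidenceFinset w \ {s(w,v), s(w,u)}) := by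
      rw [hT, hAB]; simp
    calc T.card ≤ _ := Finset.card_le_card this
      _ ≤ ∑ w ∈ A ∪ B, (H.incidenceFinset w \ {s(w,v), s(w,u)}).card :=
        Finset.card_biUnion_le
      _ ≤ ∑ w ∈ A ∪ B, 2 := Finset.sum_le_sum hterm
      _ = (A ∪ B).card * 2 := by rw [Finset.sum_const, smul_eq_mul]
      _ ≤ 6 := by
        have := Finset.card_union_le A B
        omega
  · obtain ⟨w₀, hw₀⟩ := Finset.nonempty_of_ne_empty hAB
    have hw₀A : w₀ ∈ A := (Finset.mem_inter.mp hw₀).1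
    have hw₀B : w₀ ∈ B := (Finset.mem_inter.mp hw₀).2
    have hAsub : A ⊆ {w₀} := by
      intro a ha
      rw [Finset.mem_singleton]
      exact Finset.card_le_one.mp hAcard a ha w₀ hw₀A
    have hABu : A ∪ B = B := Finset.union_eq_right.mpr (fun a ha => by
      have := Finset.mem_singleton.mp (hAsub ha); exact this ▸ hw₀B)
    -- second part card
    have hpart2 : ((A ∩ B).biUnion (fun w => ({s(w,v), s(w,u)} : Finset (Sym2 V)))).card ≤ 2 := by
      have : (A ∩ B).biUnion (fun w => ({s(w,v), s(w,u)} : Finset (Sym2 V))) ⊆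
          {s(w₀,v), s(w₀,u)} := by
        intro x hx
        rw [Finset.mem_biUnion] at hx
        obtain ⟨w, hw, hx⟩ := hx
        have := Finset.mem_singleton.mp (hAsub (Finset.mem_inter.mp hw).1)
        subst this; exact hx
      refine le_trans (Finset.card_le_card this) ?_
      refine le_trans (Finset.card_insert_le _ _) ?_
      simp
    -- first part
    have hw₀term : (H.incidenceFinset w₀ \ {s(w₀,v), s(w₀,u)}).card ≤ 1 := by
      have h1 := (hAmem w₀).mp hw₀A
      have h2 := (hBmem w₀).mp hw₀B
      have hm1 : s(w₀,v) ∈ H.incidenceFinset w₀ := by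
        rw [mem_incidenceFinset]; exact ⟨h1.1.symm, Sym2.mem_mk_left _ _⟩
      have hm2 : s(w₀,u) ∈ H.incidenceFinset w₀ := by
        rw [mem_incidenceFinset]; exact ⟨h2.1.symm, Sym2.mem_mk_left _ _⟩
      have hne12 : s(w₀,v) ≠ s(w₀,u) := by
        intro h
        rw [Sym2.eq_iff] at h
        rcases h with ⟨-, h⟩ | ⟨h, -⟩
        · exact hadj.ne h
        · exact h1.2 h
      have hsb : H.incidenceFinset w₀ \ {s(w₀,v), s(w₀,u)} ⊆
          ((H.incidenceFinset w₀).erase s(w₀,v)).erase s(w₀,u) := by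
        intro y hy
        rw [Finset.mem_sdiff] at hy
        simp only [Finset.mem_insert, Finset.mem_singleton] at hy
        refine Finset.mem_erase.mpr ⟨fun h => hy.2 (Or.inr h), Finset.mem_erase.mpr
          ⟨fun h => hy.2 (Or.inl h), hy.1⟩⟩
      have hcer : (((H.incidenceFinset w₀).erase s(w₀,v)).erase s(w₀,u)).card =
          H.degree w₀ - 2 := by
        rw [Finset.card_erase_of_mem (Finset.mem_erase.mpr ⟨hne12.symm, hm2⟩),
          Finset.card_erase_of_mem hm1, H.card_incidenceFinset_eq_degree]
        omega
      have := hsub w₀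
      have := Finset.card_le_card hsb
      omega
    have hpart1 : ((A ∪ B).biUnion
        (fun w => H.incidenceFinset w \ {s(w,v), s(w,u)})).card ≤ 3 := by
      rw [hABu, ← Finset.insert_erase hw₀B, Finset.biUnion_insert]
      refine le_trans (Finset.card_union_le _ _) ?_
      have h3 : ((B.erase w₀).biUnion
          (fun w => H.incidenceFinset w \ {s(w,v), s(w,u)})).card ≤ 2 := by
        calc _ ≤ ∑ w ∈ B.erase w₀, (H.incidenceFinset w \ {s(w,v), s(w,u)}).card :=
            Finset.card_biUnion_le
          _ ≤ ∑ w ∈ B.erase w₀, 2 := Finset.sum_le_sum (fun w hw => hterm w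
              (by rw [hABu]; exact Finset.mem_of_mem_erase hw))
          _ = (B.erase w₀).card * 2 := by rw [Finset.sum_const, smul_eq_mul]
          _ ≤ 2 := by
            have := Finset.card_erase_of_mem hw₀B
            omega
      omega
    calc T.card ≤ _ + _ := Finset.card_union_le _ _
      _ ≤ 6 := by omega

lemma conflict_induce {V : Type*} (H : SimpleGraph V) (v : V)
    {e₁ e₂ : Sym2 ({v}ᶜ : Set V)}
    (h : EdgeConflict H (Sym2.map Subtype.val e₁) (Sym2.map Subtype.val e₂)) :
    EdgeConflict (H.induce ({v}ᶜ : Set V)) e₁ e₂ := by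
  have hinj : Function.Injective (Subtype.val : ({v}ᶜ : Set V) → V) := Subtype.val_injective
  have hminj := Sym2.map.injective hinj
  obtain ⟨hne, h⟩ := h
  refine ⟨fun hh => hne (hh ▸ rfl), ?_⟩
  have hvmem : ∀ e : Sym2 ({v}ᶜ : Set V), v ∉ Sym2.map Subtype.val e := by
    intro e he
    rw [Sym2.mem_map] at he
    obtain ⟨x, -, hx⟩ := he
    exact x.2 (by simp [hx])
  rcases h with ⟨hdisj, x, hx, y, hy, hxy⟩ | ⟨a, b, c, hab, hbc, hac, m1, m2⟩
  · left
    constructor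
    · intro z hz hz'
      exact hdisj z (Sym2.mem_map.mpr ⟨z, hz, rfl⟩) (Sym2.mem_map.mpr ⟨z, hz', rfl⟩)
    · obtain ⟨x', hx', hxv⟩ := Sym2.mem_map.mp hx
      obtain ⟨y', hy', hyv⟩ := Sym2.mem_map.mp hy
      refine ⟨x', hx', y', hy', ?_⟩
      have hA : H.Adj (x' : V) (y' : V) := by rw [hxv, hyv]; exact hxy
      exact hA
  · right
    simp only [Set.mem_insert_iff, Set.mem_singleton_iff] at m1 m2
    have hme : Sym2.map Subtype.val e₁ ≠ Sym2.map Subtype.val e₂ := hne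
    -- none of a b c equals v
    have habc : a ≠ v ∧ b ≠ v ∧ c ≠ v := by
      refine ⟨?_, ?_, ?_⟩ <;> rintro rfl <;>
        rcases m1 with h1 | h1 | h1 <;> rcases m2 with h2 | h2 | h2 <;>
          first
            | exact hne (h1.trans h2.symm)
            | exact hvmem e₁ (by rw [h1]; exact Sym2.mem_mk_left _ _)
            | exact hvmem e₁ (by rw [h1]; exact Sym2.mem_mk_right _ _)
            | exact hvmem e₂ (by rw [h2]; exact Sym2.mem_mk_left _ _)
            | exact hvmem e₂ (by rw [h2]; exact Sym2.mem_mk_right _ _)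
    obtain ⟨ha, hb, hc⟩ := habc
    refine ⟨⟨a, by simp [ha]⟩, ⟨b, by simp [hb]⟩, ⟨c, by simp [hc]⟩, ?_, ?_, ?_, ?_, ?_⟩
    · simpa using hab
    · simpa using hbc
    · simpa using hac
    · rcases m1 with h1 | h1 | h1
      · exact Or.inl (hminj (by rw [h1, Sym2.map_pair_eq]))
      · exact Or.inr (Or.inl (hminj (by rw [h1, Sym2.map_pair_eq])))
      · exact Or.inr (Or.inr (hminj (by rw [h1, Sym2.map_pair_eq])))
    · rcases m2 with h2 | h2 | h2
      · exact Or.inl (hminj (by rw [h2, Sym2.map_pair_eq]))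
      · exact Or.inr (Or.inl (hminj (by rw [h2, Sym2.map_pair_eq])))
      · exact Or.inr (Or.inr (hminj (by rw [h2, Sym2.map_pair_eq])))

lemma lift_edge {V : Type*} (H : SimpleGraph V) (v : V) {e : Sym2 V}
    (he : e ∈ H.edgeSet) (hve : v ∉ e) :
    ∃ e' ∈ (H.induce ({v}ᶜ : Set V)).edgeSet, Sym2.map Subtype.val e' = e := by
  induction e using Sym2.ind with
  | _ x y =>
    rw [SimpleGraph.mem_edgeSet] at he
    have hx : x ≠ v := fun h => hve (h ▸ Sym2.mem_mk_left x y)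
    have hy : y ≠ v := fun h => hve (h ▸ Sym2.mem_mk_right x y)
    refine ⟨s(⟨x, by simp [hx]⟩, ⟨y, by simp [hy]⟩), ?_, by rw [Sym2.map_pair_eq]⟩
    rw [SimpleGraph.mem_edgeSet]
    simpa using he

lemma edge_with_v {V : Type*} (H : SimpleGraph V) (v : V) {e : Sym2 V}
    (he : e ∈ H.edgeSet) (hve : v ∈ e) : ∃ w, H.Adj v w ∧ e = s(v, w) := by
  induction e using Sym2.ind with
  | _ x y =>
    rw [SimpleGraph.mem_edgeSet] at he
    rcases Sym2.mem_iff.mp hve with rfl | rfl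
    · exact ⟨y, he, rfl⟩
    · exact ⟨x, he.symm, Sym2.eq_swap⟩

/-- Deleting a vertex of degree at most 2 from a subcubic graph: if `H - v` has an
injective edge-coloring with 7 colors, so does `H`. -/
theorem extend_coloring_low_degree_vertex {V : Type*} [Fintype V] (H : SimpleGraph V)
    [DecidableRel H.Adj] (hsub : ∀ u : V, H.degree u ≤ 3) (v : V) (hv : H.degree v ≤ 2)
    (hcol : ∃ f : Sym2 (({v}ᶜ : Set V)) → Fin 7,
      IsInjEdgeColoring (H.induce ({v}ᶜ : Set V)) f) :
    ∃ f : Sym2 V → Fin 7, IsInjEdgeColoring H f := by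
  classical
  obtain ⟨f, hf⟩ := hcol
  have hembinj : Function.Injective (Sym2.map (Subtype.val : ({v}ᶜ : Set V) → V)) :=
    Sym2.map.injective Subtype.val_injective
  -- transport the coloring of the induced graph to Sym2 V
  obtain ⟨oldColor, hold⟩ : ∃ g : Sym2 V → Fin 7,
      ∀ e', g (Sym2.map Subtype.val e') = f e' := by
    refine ⟨fun e => if h : ∃ e'', Sym2.map (Subtype.val : ({v}ᶜ : Set V) → V) e'' = e
      then f h.choose else 0, ?_⟩
    intro e'
    have hex : ∃ x, Sym2.map (Subtype.val : ({v}ᶜ : Set V) → V) x =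
        Sym2.map Subtype.val e' := ⟨e', rfl⟩
    simp only [dif_pos hex]
    congr 1
    exact hembinj hex.choose_spec
  have htrans : ∀ e₁ ∈ H.edgeSet, ∀ e₂ ∈ H.edgeSet, v ∉ e₁ → v ∉ e₂ →
      EdgeConflict H e₁ e₂ → oldColor e₁ ≠ oldColor e₂ := by
    intro e₁ h1 e₂ h2 hv1 hv2 hc
    obtain ⟨E₁, hE₁, hm1⟩ := lift_edge H v h1 hv1
    obtain ⟨E₂, hE₂, hm2⟩ := lift_edge H v h2 hv2
    rw [← hm1, ← hm2, hold, hold]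
    exact hf E₁ hE₁ E₂ hE₂ (conflict_induce H v (by rw [hm1, hm2]; exact hc))
  -- the (at most two) neighbors of v
  obtain ⟨u₁, u₂, hNsub⟩ : ∃ u₁ u₂ : V, H.neighborFinset v ⊆ {u₁, u₂} := by
    have hN2 : (H.neighborFinset v).card ≤ 2 := by
      rw [H.card_neighborFinset_eq_degree]; exact hv
    obtain h0 | h1 | h2 : (H.neighborFinset v).card = 0 ∨
        (H.neighborFinset v).card = 1 ∨ (H.neighborFinset v).card = 2 := by omega
    · exact ⟨v, v, by rw [Finset.card_eq_zero.mp h0]; exact Finset.empty_subset _⟩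
    · obtain ⟨a, ha⟩ := Finset.card_eq_one.mp h1
      exact ⟨a, a, by rw [ha]; intro x hx; simpa using hx⟩
    · obtain ⟨a, b, _, hs⟩ := Finset.card_eq_two.mp h2
      exact ⟨a, b, by rw [hs]⟩
  have hvedge : ∀ e ∈ H.edgeSet, v ∈ e → e = s(v,u₁) ∨ e = s(v,u₂) := by
    intro e he hve
    obtain ⟨w, hw, rfl⟩ := edge_with_v H v he hve
    have hwN : w ∈ H.neighborFinset v := by simp [hw]
    rcases Finset.mem_insert.mp (hNsub hwN) with rfl | h
    · exact Or.inl rfl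
    · rw [Finset.mem_singleton.mp h]
      exact Or.inr rfl
  -- old conflicting edges of the two new edges
  set C₁ := H.edgeFinset.filter (fun e => EdgeConflict H s(v,u₁) e ∧ v ∉ e) with hC₁
  set C₂ := H.edgeFinset.filter (fun e => EdgeConflict H s(v,u₂) e ∧ v ∉ e) with hC₂
  have hCsub : ∀ u : V, H.edgeFinset.filter (fun e => EdgeConflict H s(v,u) e ∧ v ∉ e) ⊆
      H.edgeFinset.filter (EdgeConflict H s(v,u)) := by
    intro u e he
    rw [Finset.mem_filter] at he ⊢
    exact ⟨he.1, he.2.1⟩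
  have hC₁card : s(v,u₁) ∈ H.edgeSet → C₁.card ≤ 6 := by
    intro h
    exact le_trans (Finset.card_le_card (hCsub u₁))
      (conflict_card_le H hsub hv (H.mem_edgeSet.mp h))
  have hC₂card : s(v,u₂) ∈ H.edgeSet → C₂.card ≤ 6 := by
    intro h
    exact le_trans (Finset.card_le_card (hCsub u₂))
      (conflict_card_le H hsub hv (H.mem_edgeSet.mp h))
  -- choose a color for the first new edge
  obtain ⟨c₁, hc₁⟩ : ∃ c : Fin 7, s(v,u₁) ∈ H.edgeSet → c ∉ C₁.image oldColor := by
    by_cases h : s(v,u₁) ∈ H.edgeSet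
    · obtain ⟨c, hc⟩ := exists_color_notin _
        (le_trans Finset.card_image_le (hC₁card h))
      exact ⟨c, fun _ => hc⟩
    · exact ⟨0, fun h' => absurd h' h⟩
  -- choose a color for the second new edge
  obtain ⟨c₂, hc₂, hc₂'⟩ : ∃ c : Fin 7, (s(v,u₂) ∈ H.edgeSet → c ∉ C₂.image oldColor) ∧
      (s(v,u₂) ∈ H.edgeSet → s(v,u₁) ∈ H.edgeSet → EdgeConflict H s(v,u₂) s(v,u₁) →
        c ≠ c₁) := by
    by_cases h : s(v,u₂) ∈ H.edgeSet
    · by_cases hx : s(v,u₁) ∈ H.edgeSet ∧ EdgeConflict H s(v,u₂) s(v,u₁)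
      · have hins : insert (s(v,u₁)) C₂ ⊆ H.edgeFinset.filter (EdgeConflict H s(v,u₂)) := by
          intro e he
          rcases Finset.mem_insert.mp he with rfl | he
          · exact Finset.mem_filter.mpr ⟨mem_edgeFinset.mpr hx.1, hx.2⟩
          · exact hCsub u₂ he
        have hnotin : s(v,u₁) ∉ C₂ := by
          rw [hC₂, Finset.mem_filter]
          rintro ⟨-, -, hh⟩
          exact hh (Sym2.mem_mk_left v u₁)
        have hcard : C₂.card + 1 ≤ 6 := by
          rw [← Finset.card_insert_of_notMem hnotin]
          exact le_trans (Finset.card_le_card hins)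
            (conflict_card_le H hsub hv (H.mem_edgeSet.mp h))
        obtain ⟨c, hc⟩ := exists_color_notin (insert c₁ (C₂.image oldColor))
          (le_trans (Finset.card_insert_le _ _)
            (by have := Finset.card_image_le (f := oldColor) (s := C₂); omega))
        refine ⟨c, fun _ => fun hc' => hc (Finset.mem_insert_of_mem hc'), ?_⟩
        intro _ _ _ hcc
        exact hc (by rw [hcc]; exact Finset.mem_insert_self c₁ _)
      · obtain ⟨c, hc⟩ := exists_color_notin _
          (le_trans Finset.card_image_le (hC₂card h))
        exact ⟨c, fun _ => hc, fun _ h1 h2 => absurd ⟨h1, h2⟩ hx⟩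
    · exact ⟨0, fun h' => absurd h' h, fun h' => absurd h' h⟩
  -- helper facts
  have hK₁ : ∀ e ∈ H.edgeSet, v ∉ e → EdgeConflict H s(v,u₁) e →
      s(v,u₁) ∈ H.edgeSet → c₁ ≠ oldColor e := by
    intro e he hv' hc hE heq
    exact (hc₁ hE) (heq ▸ Finset.mem_image_of_mem oldColor
      (Finset.mem_filter.mpr ⟨mem_edgeFinset.mpr he, hc, hv'⟩))
  have hK₂ : ∀ e ∈ H.edgeSet, v ∉ e → EdgeConflict H s(v,u₂) e →
      s(v,u₂) ∈ H.edgeSet → c₂ ≠ oldColor e := by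
    intro e he hv' hc hE heq
    exact (hc₂ hE) (heq ▸ Finset.mem_image_of_mem oldColor
      (Finset.mem_filter.mpr ⟨mem_edgeFinset.mpr he, hc, hv'⟩))
  refine ⟨fun e => if e = s(v,u₁) then c₁ else if e = s(v,u₂) then c₂ else oldColor e, ?_⟩
  intro e₁ he₁ e₂ he₂ hconf
  have hne := hconf.1
  beta_reduce
  by_cases h11 : e₁ = s(v,u₁)
  · subst h11
    simp only [if_pos rfl]
    by_cases h21 : e₂ = s(v,u₁)
    · exact absurd h21.symm hne
    · by_cases h22 : e₂ = s(v,u₂)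
      · subst h22
        rw [if_neg h21, if_pos rfl]
        exact (hc₂' he₂ he₁ hconf.symm2).symm
      · have hv2 : v ∉ e₂ := fun hh => by
          rcases hvedge e₂ he₂ hh with h | h
          · exact h21 h
          · exact h22 h
        rw [if_neg h21, if_neg h22]
        exact hK₁ e₂ he₂ hv2 hconf he₁
  · by_cases h12 : e₁ = s(v,u₂)
    · subst h12
      rw [if_neg h11, if_pos rfl]
      by_cases h21 : e₂ = s(v,u₁)
      · subst h21
        rw [if_pos rfl]
        exact hc₂' he₁ he₂ hconf
      · by_cases h22 : e₂ = s(v,u₂)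
        · exact absurd h22.symm hne
        · have hv2 : v ∉ e₂ := fun hh => by
            rcases hvedge e₂ he₂ hh with h | h
            · exact h21 h
            · exact h22 h
          rw [if_neg h21, if_neg h22]
          exact hK₂ e₂ he₂ hv2 hconf he₁
    · have hv1 : v ∉ e₁ := fun hh => by
        rcases hvedge e₁ he₁ hh with h | h
        · exact h11 h
        · exact h12 h
      rw [if_neg h11, if_neg h12]
      by_cases h21 : e₂ = s(v,u₁)
      · subst h21
        rw [if_pos rfl]
        exact (hK₁ e₁ he₁ hv1 hconf.symm2 he₂).symm
      · by_cases h22 : e₂ = s(v,u₂)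
        · subst h22
          rw [if_neg h21, if_pos rfl]
          exact (hK₂ e₁ he₁ hv1 hconf.symm2 he₂).symm
        · have hv2 : v ∉ e₂ := fun hh => by
            rcases hvedge e₂ he₂ hh with h | h
            · exact h21 h
            · exact h22 h
          rw [if_neg h21, if_neg h22]
          exact htrans e₁ he₁ e₂ he₂ hv1 hv2 hconf
end
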